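/- arXiv:1908.03788 — 4 statements merged into one kernel-verified Lean document; each statement's English description precedes it below -/
import Mathlib

section
/- Every finite nonempty graph has an avoidable vertex. -/
variable {V : Type*}

/-- `p` is an induced path on `k` vertices in `G`: injective, and adjacency holds
exactly between consecutive vertices. -/
def IsInducedPathOn (G : SimpleGraph V) (k : ℕ) (p : Fin k → V) : Prop :=
  Function.Injective p ∧
    ∀ i j : Fin k, G.Adj (p i) (p j) ↔ (i.val + 1 = j.val ∨ j.val + 1 = i.val)

/-- `c` is an induced cycle on `n ≥ 3` vertices in `G`: injective, and adjacency holds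
exactly between cyclically consecutive vertices. -/
def IsInducedCycleOn (G : SimpleGraph V) (n : ℕ) (c : Fin n → V) : Prop :=
  3 ≤ n ∧ Function.Injective c ∧
    ∀ i j : Fin n, G.Adj (c i) (c j) ↔ ((i.val + 1) % n = j.val ∨ (j.val + 1) % n = i.val)

/-- The vertices of `q` all lie on some induced cycle of `G`. -/
def InInducedCycle (G : SimpleGraph V) {m : ℕ} (q : Fin m → V) : Prop :=
  ∃ (n : ℕ) (c : Fin n → V), IsInducedCycleOn G n c ∧ Set.range q ⊆ Set.range c

/-- `q` is an extension of the induced path `p`: an induced path on `k+2` vertices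
whose middle `k` vertices are `p` (one new vertex at each end). -/
def IsExtension (G : SimpleGraph V) {k : ℕ} (p : Fin k → V) (q : Fin (k + 2) → V) : Prop :=
  IsInducedPathOn G (k + 2) q ∧ ∀ i : Fin k, q i.succ.castSucc = p i

/-- `p` is an avoidable path in `G`: an induced path each of whose extensions lies on an
induced cycle of `G`. -/
def IsAvoidable (G : SimpleGraph V) {k : ℕ} (p : Fin k → V) : Prop :=
  IsInducedPathOn G k p ∧
    ∀ q : Fin (k + 2) → V, IsExtension G p q → InInducedCycle G q

/-- `v` is an avoidable vertex: every induced path `x–v–y` lies on an induced cycle. -/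
def AvoidableVertex (G : SimpleGraph V) (v : V) : Prop :=
  ∀ x y : V, G.Adj x v → G.Adj v y → x ≠ y → ¬ G.Adj x y → InInducedCycle G ![x, v, y]

/-- `v` lies outside the closed neighbourhood of `w`. -/
def OutsideClosedNbhd (G : SimpleGraph V) (w v : V) : Prop :=
  v ≠ w ∧ ¬ G.Adj w v

/-- Property `H_R(G,k,w)`: either `G − N[w]` has no induced path on `k` vertices,
or there is an induced path on `k` vertices inside `G − N[w]` avoidable in `G`. -/
def HR (G : SimpleGraph V) (k : ℕ) (w : V) : Prop :=
  (¬ ∃ p : Fin k → V, IsInducedPathOn G k p ∧ ∀ i, OutsideClosedNbhd G w (p i)) ∨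
  (∃ p : Fin k → V, IsInducedPathOn G k p ∧ (∀ i, OutsideClosedNbhd G w (p i)) ∧
    ∀ q : Fin (k + 2) → V, IsExtension G p q → InInducedCycle G q)

/-- The graph obtained from `G` by merging adjacent vertices `u₁, u₂` into one vertex
(represented by `u₁`, with `u₂` becoming an isolated stray vertex). -/
def mergeGraph (G : SimpleGraph V) (u₁ u₂ : V) : SimpleGraph V where
  Adj a b := a ≠ b ∧ a ≠ u₂ ∧ b ≠ u₂ ∧
    (G.Adj a b ∨ (a = u₁ ∧ G.Adj u₂ b) ∨ (b = u₁ ∧ G.Adj a u₂))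
  symm := by
    constructor
    rintro a b ⟨h1, h2, h3, h4⟩
    refine ⟨h1.symm, h3, h2, ?_⟩
    rcases h4 with h | ⟨ha, h⟩ | ⟨hb, h⟩
    · exact Or.inl h.symm
    · exact Or.inr (Or.inr ⟨ha, h.symm⟩)
    · exact Or.inr (Or.inl ⟨hb, h.symm⟩)
  loopless := ⟨fun a h => h.1 rfl⟩

/-- `G` is chordal: every induced cycle has exactly three vertices. -/
def Chordal (G : SimpleGraph V) : Prop :=
  ∀ (n : ℕ) (c : Fin n → V), IsInducedCycleOn G n c → n = 3

/-- `v` is a simplicial vertex: its neighbourhood is a clique. -/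
def SimplicialVertex (G : SimpleGraph V) (v : V) : Prop :=
  ∀ x y : V, G.Adj v x → G.Adj v y → x ≠ y → G.Adj x y

open SimpleGraph

private def gRes (G : SimpleGraph V) (T : Set V) : SimpleGraph V where
  Adj a b := G.Adj a b ∧ a ∈ T ∧ b ∈ T
  symm := ⟨fun a b ⟨h, ha, hb⟩ => ⟨h.symm, hb, ha⟩⟩
  loopless := ⟨fun a h => G.irrefl h.1⟩

private def cN (G : SimpleGraph V) (v : V) : Set V := {t | t = v ∨ G.Adj v t}

private lemma cN_mem {G : SimpleGraph V} {v t : V} : t ∈ cN G v ↔ (t = v ∨ G.Adj v t) := Iff.rfl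

private def AvoidIn (G : SimpleGraph V) (A : Set V) (v : V) : Prop :=
  ∀ x y, x ∈ A → y ∈ A → G.Adj v x → G.Adj v y → x ≠ y → ¬ G.Adj x y →
    (gRes G (insert x (insert y (A \ cN G v)))).Reachable x y

private lemma gRes_mono {G : SimpleGraph V} {T₁ T₂ : Set V} (h : T₁ ⊆ T₂) :
    gRes G T₁ ≤ gRes G T₂ := by
  intro a b hab
  exact ⟨hab.1, h hab.2.1, h hab.2.2⟩

private lemma reachable_transfer {R₁ R₂ : SimpleGraph V} {x y : V}
    (h : ∀ a b, R₁.Adj a b → R₂.Reachable a b) (hr : R₁.Reachable x y) : R₂.Reachable x y := by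
  obtain ⟨p⟩ := hr
  induction p with
  | nil => exact Reachable.refl _
  | cons e q ih => exact (h _ _ e).trans ih

private lemma walk_to_getVert {R : SimpleGraph V} {u w : V} (p : R.Walk u w) (i : ℕ) :
    ∃ q : R.Walk u (p.getVert i), q.length ≤ i := by
  induction p generalizing i with
  | nil => exact ⟨Walk.nil, Nat.zero_le i⟩
  | cons h q ih =>
    cases i with
    | zero => exact ⟨Walk.nil, Nat.zero_le 0⟩
    | succ n =>
      obtain ⟨r, hr⟩ := ih n
      exact ⟨Walk.cons h r, by simpa using Nat.succ_le_succ hr⟩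

private lemma walk_from_getVert {R : SimpleGraph V} {u w : V} (p : R.Walk u w) (i : ℕ) :
    ∃ q : R.Walk (p.getVert i) w, q.length ≤ p.length - i := by
  induction p generalizing i with
  | nil => exact ⟨Walk.nil, Nat.zero_le _⟩
  | cons h q ih =>
    cases i with
    | zero => exact ⟨Walk.cons h q, le_of_eq rfl⟩
    | succ n =>
      obtain ⟨r, hr⟩ := ih n
      refine ⟨r, ?_⟩
      simp only [Walk.length_cons]
      exact le_trans hr (by omega)

private lemma getVert_mem {R : SimpleGraph V} {T : Set V}
    (hR : ∀ a b : V, R.Adj a b → b ∈ T) {u w : V} (p : R.Walk u w) (hu : u ∈ T) (i : ℕ) :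
    p.getVert i ∈ T := by
  induction p generalizing i with
  | nil => exact hu
  | cons h q ih =>
    cases i with
    | zero => exact hu
    | succ n => exact ih (hR _ _ h) n

private lemma mod_succ_iff {n a b : ℕ} (ha : a < n) (hb : b < n) :
    (a + 1) % n = b ↔ (a + 1 = b ∨ (a + 1 = n ∧ b = 0)) := by
  rcases Nat.lt_or_ge (a + 1) n with h | h
  · rw [Nat.mod_eq_of_lt h]; omega
  · have hn : a + 1 = n := by omega
    rw [hn, Nat.mod_self]; omega

private lemma exists_induced_cycle_fn {G : SimpleGraph V} {A : Set V} {v x y : V}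
    (hav : AvoidIn G A v) (hx : x ∈ A) (hy : y ∈ A) (hvx : G.Adj v x) (hvy : G.Adj v y)
    (hxy : x ≠ y) (hnadj : ¬ G.Adj x y) : InInducedCycle G ![x, v, y] := by
  classical
  set T : Set V := insert x (insert y (A \ cN G v)) with hT
  set R : SimpleGraph V := gRes G T with hRdef
  have hr : R.Reachable x y := hav x y hx hy hvx hvy hxy hnadj
  have hex : ∃ n, ∃ p : R.Walk x y, p.length = n := hr.elim fun p => ⟨p.length, p, rfl⟩
  obtain ⟨p, hpfind⟩ := Nat.find_spec hex
  have hmin : ∀ q : R.Walk x y, p.length ≤ q.length := by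
    intro q; rw [hpfind]; exact Nat.find_min' hex ⟨q, rfl⟩
  set L := p.length with hL
  set g : ℕ → V := p.getVert with hg
  have hg0 : g 0 = x := p.getVert_zero
  have hgL : g L = y := p.getVert_length
  have hRadj' : ∀ a b, R.Adj a b → b ∈ T := by
    intro a b hab
    rw [hRdef] at hab
    exact hab.2.2
  have hmem : ∀ i, g i ∈ T := fun i => getVert_mem hRadj' p (Set.mem_insert x _) i
  have hmemT : ∀ i, g i = x ∨ g i = y ∨ (g i ∈ A ∧ g i ≠ v ∧ ¬ G.Adj v (g i)) := by
    intro i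
    have h := hmem i
    rw [hT, Set.mem_insert_iff, Set.mem_insert_iff, Set.mem_diff] at h
    rcases h with h | h | ⟨h1, h2⟩
    · exact Or.inl h
    · exact Or.inr (Or.inl h)
    · exact Or.inr (Or.inr ⟨h1, fun hh => h2 (Or.inl hh), fun hh => h2 (Or.inr hh)⟩)
  have hinj : ∀ i j, i ≤ L → j ≤ L → g i = g j → i = j := by
    have aux : ∀ i j, i < j → j ≤ L → g i ≠ g j := by
      intro i j hij hjL heq
      obtain ⟨q₁, h₁⟩ := walk_to_getVert p i
      obtain ⟨q₂, h₂⟩ := walk_from_getVert p j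
      have hle := hmin (q₁.append (q₂.copy heq.symm rfl))
      rw [Walk.length_append, Walk.length_copy] at hle
      omega
    intro i j hi hj heq
    rcases lt_trichotomy i j with h | h | h
    · exact absurd heq (aux i j h hj)
    · exact h
    · exact absurd heq.symm (aux j i h hi)
  have hchord : ∀ i j, i < j → j ≤ L → R.Adj (g i) (g j) → j = i + 1 := by
    intro i j hij hjL hadj
    by_contra hne
    obtain ⟨q₁, h₁⟩ := walk_to_getVert p i
    obtain ⟨q₂, h₂⟩ := walk_from_getVert p j
    have hle := hmin (q₁.append (Walk.cons hadj q₂))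
    rw [Walk.length_append, Walk.length_cons] at hle
    omega
  have hcons : ∀ i, i < L → R.Adj (g i) (g (i + 1)) := fun i hi => p.adj_getVert_succ hi
  have hL2 : 2 ≤ L := by
    have h0 : L ≠ 0 := by
      intro h0
      exact hxy (by rw [← hg0, ← hgL, h0])
    have h1 : L ≠ 1 := by
      intro h1
      have hadj := hcons 0 (by omega)
      have hy1 : g (0 + 1) = y := by rw [← hgL, h1]
      rw [hg0, hy1] at hadj
      exact hnadj hadj.1
    omega
  have hgv : ∀ i, g i ≠ v := by
    intro i h
    rcases hmemT i with hh | hh | hh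
    · exact G.irrefl (by rw [← h, hh] at hvx; exact hvx)
    · exact G.irrefl (by rw [← h, hh] at hvy; exact hvy)
    · exact hh.2.1 h
  have hmid : ∀ i, i ≤ L → G.Adj v (g i) → i = 0 ∨ i = L := by
    intro i hiL hadj
    rcases hmemT i with hh | hh | hh
    · exact Or.inl (hinj i 0 hiL (by omega) (by rw [hh, hg0]))
    · exact Or.inr (hinj i L hiL le_rfl (by rw [hh, hgL]))
    · exact absurd hadj hh.2.2
  set c : Fin (L + 2) → V := fun i => if i.val = 0 then v else g (i.val - 1) with hc
  have hc0 : ∀ i : Fin (L + 2), i.val = 0 → c i = v := by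
    intro i h; simp only [hc, h, if_pos]
  have hcs : ∀ i : Fin (L + 2), i.val ≠ 0 → c i = g (i.val - 1) := by
    intro i h; simp only [hc, h, if_neg, if_false]
  refine ⟨L + 2, c, ⟨by omega, ?_, ?_⟩, ?_⟩
  · -- injectivity
    intro i j heq
    by_cases hi : i.val = 0 <;> by_cases hj : j.val = 0
    · exact Fin.ext (by omega)
    · rw [hc0 i hi, hcs j hj] at heq; exact absurd heq.symm (hgv _)
    · rw [hcs i hi, hc0 j hj] at heq; exact absurd heq (hgv _)
    · rw [hcs i hi, hcs j hj] at heq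
      have h1 : i.val - 1 ≤ L := by have := i.isLt; omega
      have h2 : j.val - 1 ≤ L := by have := j.isLt; omega
      have := hinj _ _ h1 h2 heq
      exact Fin.ext (by omega)
  · -- adjacency iff
    intro i j
    have hilt := i.isLt
    have hjlt := j.isLt
    rw [mod_succ_iff hilt hjlt, mod_succ_iff hjlt hilt]
    by_cases hi : i.val = 0 <;> by_cases hj : j.val = 0
    · rw [hc0 i hi, hc0 j hj]
      constructor
      · intro h; exact absurd h (G.irrefl)
      · intro h; exact absurd h (by omega)
    · rw [hc0 i hi, hcs j hj]
      constructor
      · intro h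
        rcases hmid (j.val - 1) (by omega) h with h0 | hLe
        · exact Or.inl (Or.inl (by omega))
        · exact Or.inr (Or.inr (by omega))
      · intro h
        have hj' : j.val = 1 ∨ j.val = L + 1 := by omega
        rcases hj' with h1 | h1
        · rw [show j.val - 1 = 0 by omega, hg0]; exact hvx
        · rw [show j.val - 1 = L by omega, hgL]; exact hvy
    · rw [hcs i hi, hc0 j hj]
      constructor
      · intro h
        rcases hmid (i.val - 1) (by omega) h.symm with h0 | hLe
        · exact Or.inr (Or.inl (by omega))
        · exact Or.inl (Or.inr (by omega))
      · intro h
        have hi' : i.val = 1 ∨ i.val = L + 1 := by omega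
        rcases hi' with h1 | h1
        · rw [show i.val - 1 = 0 by omega, hg0]; exact hvx.symm
        · rw [show i.val - 1 = L by omega, hgL]; exact hvy.symm
    · rw [hcs i hi, hcs j hj]
      have haL : i.val - 1 ≤ L := by omega
      have hbL : j.val - 1 ≤ L := by omega
      constructor
      · intro h
        have hRadj : R.Adj (g (i.val - 1)) (g (j.val - 1)) := ⟨h, hmem _, hmem _⟩
        have hne : i.val - 1 ≠ j.val - 1 := fun he => G.irrefl (he ▸ h)
        rcases Nat.lt_or_ge (i.val - 1) (j.val - 1) with hlt | hge
        · have := hchord _ _ hlt hbL hRadj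
          exact Or.inl (Or.inl (by omega))
        · have hlt : j.val - 1 < i.val - 1 := by omega
          have := hchord _ _ hlt haL hRadj.symm
          exact Or.inr (Or.inl (by omega))
      · intro h
        have h' : i.val = j.val + 1 ∨ j.val = i.val + 1 := by omega
        rcases h' with h1 | h1
        · have hadj := hcons (j.val - 1) (by omega)
          rw [show (j.val - 1) + 1 = i.val - 1 by omega] at hadj
          exact hadj.1.symm
        · have hadj := hcons (i.val - 1) (by omega)
          rw [show (i.val - 1) + 1 = j.val - 1 by omega] at hadj
          exact hadj.1
  · -- range
    intro z hz
    simp only [Set.mem_range] at hz ⊢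
    obtain ⟨t, rfl⟩ := hz
    fin_cases t
    · refine ⟨⟨1, by omega⟩, ?_⟩
      rw [hcs ⟨1, by omega⟩ (by norm_num)]
      simp [hg0]
    · exact ⟨⟨0, by omega⟩, by rw [hc0 ⟨0, by omega⟩ rfl]; simp⟩
    · refine ⟨⟨L + 1, by omega⟩, ?_⟩
      rw [hcs ⟨L + 1, by omega⟩ (by exact Nat.succ_ne_zero L)]
      simp only [show L + 1 - 1 = L from rfl, hgL]
      simp

private lemma claim_aux [Fintype V] :
    ∀ (n : ℕ) (G : SimpleGraph V) (A : Set V) (w : V),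
      A.ncard ≤ n → w ∈ A → (∃ u, u ∈ A ∧ u ≠ w ∧ ¬ G.Adj w u) →
      ∃ v, v ∈ A ∧ v ≠ w ∧ ¬ G.Adj w v ∧ AvoidIn G A v := by
  intro n
  induction n using Nat.strong_induction_on with
  | _ n ih =>
  intro G A w hcard hw hexu
  classical
  obtain ⟨u, hu, huw, hwu⟩ := hexu
  set X : Set V := {a | a ∈ A ∧ a ≠ w ∧ ¬ G.Adj w a} with hX
  set C : Set V := {a | a ∈ X ∧ (gRes G X).Reachable u a} with hC
  set S : Set V := {s | s ∈ A ∧ G.Adj w s ∧ ∃ c, c ∈ C ∧ G.Adj s c} with hS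
  have huX : u ∈ X := ⟨hu, huw, hwu⟩
  have huC : u ∈ C := ⟨huX, SimpleGraph.Reachable.refl u⟩
  have hCX : C ⊆ X := fun a ha => ha.1
  have hCA : C ⊆ A := fun a ha => ha.1.1
  have hSA : S ⊆ A := fun a ha => ha.1
  have hCclosed : ∀ c, c ∈ C → ∀ t, t ∈ X → G.Adj c t → t ∈ C := by
    intro c hc t ht hadj
    exact ⟨ht, hc.2.trans (SimpleGraph.Adj.reachable ⟨hadj, hc.1, ht⟩)⟩
  have hNv : ∀ v, v ∈ C → ∀ t, t ∈ A → G.Adj v t → t ∈ S ∪ C := by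
    intro v hv t ht hadj
    by_cases hWadj : G.Adj w t
    · exact Set.mem_union_left _ ⟨ht, hWadj, v, hv, hadj.symm⟩
    · have htw : t ≠ w := by
        rintro rfl
        exact hv.1.2.2 hadj.symm
      exact Set.mem_union_right _ (hCclosed v hv t ⟨ht, htw, hWadj⟩ hadj)
  set W : Set V := insert w (S ∪ C) with hW
  have hWA : W ⊆ A := Set.insert_subset hw (Set.union_subset hSA hCA)
  by_cases hAW : A ⊆ W
  · -- A = W
    by_cases hS0 : ∃ s, s ∈ S ∧ ∃ c, c ∈ C ∧ ¬ G.Adj s c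
    · -- clique-ification case
      obtain ⟨s₀, hs₀, c₀, hc₀, hs₀c₀⟩ := hS0
      set H : SimpleGraph V :=
        { Adj := fun a b => G.Adj a b ∨ (a ≠ b ∧ a ∈ S ∧ b ∈ S)
          symm := by
            constructor
            rintro a b (h | ⟨h1, h2, h3⟩)
            · exact Or.inl h.symm
            · exact Or.inr ⟨h1.symm, h3, h2⟩
          loopless := by
            constructor
            rintro a (h | ⟨h1, -, -⟩)
            · exact G.irrefl h
            · exact h1 rfl } with hH
      set A' : Set V := A \ {w} with hA'
      have hcard' : A'.ncard < n := by
        have h1 : A'.ncard < A.ncard := Set.ncard_diff_singleton_lt_of_mem hw A.toFinite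
        omega
      have hs₀w : s₀ ≠ w := by
        rintro rfl
        exact G.irrefl hs₀.2.1
      have hc₀X : c₀ ∈ X := hCX hc₀
      have hc₀s₀ : c₀ ≠ s₀ := by
        rintro rfl
        exact hc₀X.2.2 hs₀.2.1
      have hc₀H : ¬ H.Adj s₀ c₀ := by
        rintro (h | ⟨-, -, h3⟩)
        · exact hs₀c₀ h
        · exact hc₀X.2.2 h3.2.1
      obtain ⟨v, hvA', hvs₀, hvH, hvav⟩ := ih A'.ncard hcard' H A' s₀ le_rfl
        ⟨hSA hs₀, fun h => hs₀w h⟩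
        ⟨c₀, ⟨hCA hc₀, fun h => hc₀X.2.1 h⟩, hc₀s₀, hc₀H⟩
      have hvA : v ∈ A := hvA'.1
      have hvC : v ∈ C := by
        rcases Set.mem_insert_iff.mp (hAW hvA) with h | h
        · exact absurd h hvA'.2
        rcases (Set.mem_union _ _ _).mp h with h | h
        · exact absurd (Or.inr ⟨Ne.symm hvs₀, hs₀, h⟩) hvH
        · exact h
      have hvX : v ∈ X := hCX hvC
      refine ⟨v, hvA, hvX.2.1, hvX.2.2, ?_⟩
      intro x y hxA hyA hvx hvy hxy hxynadj
      have hwcn : w ∈ A \ cN G v := by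
        refine ⟨hw, ?_⟩
        rintro (h | h)
        · exact hvX.2.1 h.symm
        · exact hvX.2.2 h.symm
      by_cases hxyS : x ∈ S ∧ y ∈ S
      · have e1 : (gRes G (insert x (insert y (A \ cN G v)))).Adj x w :=
          ⟨hxyS.1.2.1.symm, Set.mem_insert _ _,
            Set.mem_insert_of_mem _ (Set.mem_insert_of_mem _ hwcn)⟩
        have e2 : (gRes G (insert x (insert y (A \ cN G v)))).Adj w y :=
          ⟨hxyS.2.2.1, Set.mem_insert_of_mem _ (Set.mem_insert_of_mem _ hwcn),
            Set.mem_insert_of_mem _ (Set.mem_insert _ _)⟩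
        exact e1.reachable.trans e2.reachable
      · have hxw : x ≠ w := by rintro rfl; exact hvX.2.2 hvx.symm
        have hyw : y ≠ w := by rintro rfl; exact hvX.2.2 hvy.symm
        have hxA' : x ∈ A' := ⟨hxA, fun h => hxw h⟩
        have hyA' : y ∈ A' := ⟨hyA, fun h => hyw h⟩
        have hHxy : ¬ H.Adj x y := by
          rintro (h | ⟨-, h2, h3⟩)
          · exact hxynadj h
          · exact hxyS ⟨h2, h3⟩
        have hr := hvav x y hxA' hyA' (Or.inl hvx) (Or.inl hvy) hxy hHxy
        refine reachable_transfer ?_ hr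
        intro a b hab
        obtain ⟨habH, haT', hbT'⟩ := hab
        have hsub : insert x (insert y (A' \ cN H v)) ⊆ insert x (insert y (A \ cN G v)) := by
          refine Set.insert_subset_insert (Set.insert_subset_insert ?_)
          intro t ht
          refine ⟨ht.1.1, ?_⟩
          rintro (h | h)
          · exact ht.2 (Or.inl h)
          · exact ht.2 (Or.inr (Or.inl h))
        have hwT : w ∈ insert x (insert y (A \ cN G v)) :=
          Set.mem_insert_of_mem _ (Set.mem_insert_of_mem _ hwcn)
        rcases habH with h | ⟨-, haS, hbS⟩
        · have e : (gRes G (insert x (insert y (A \ cN G v)))).Adj a b :=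
            ⟨h, hsub haT', hsub hbT'⟩
          exact e.reachable
        · have e1 : (gRes G (insert x (insert y (A \ cN G v)))).Adj a w :=
            ⟨haS.2.1.symm, hsub haT', hwT⟩
          have e2 : (gRes G (insert x (insert y (A \ cN G v)))).Adj w b :=
            ⟨hbS.2.1, hwT, hsub hbT'⟩
          exact e1.reachable.trans e2.reachable
    · -- S complete to C
      push_neg at hS0
      have hCcard : C.ncard < n := by
        have h1 : C ⊆ A \ {w} := fun a ha => ⟨hCA ha, fun hh => (hCX ha).2.1 hh⟩
        have h2 : C.ncard ≤ (A \ {w}).ncard := Set.ncard_le_ncard h1 (A \ {w}).toFinite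
        have h3 : (A \ {w}).ncard < A.ncard := Set.ncard_diff_singleton_lt_of_mem hw A.toFinite
        omega
      obtain ⟨v, hvC, hvav⟩ : ∃ v, v ∈ C ∧ AvoidIn G C v := by
        by_cases hclique : ∀ a, a ∈ C → ∀ b, b ∈ C → a ≠ b → G.Adj a b
        · exact ⟨u, huC, fun x y hx hy _ _ hxy hn => absurd (hclique x hx y hy hxy) hn⟩
        · push_neg at hclique
          obtain ⟨a, ha, b, hb, hab, hnadj⟩ := hclique
          obtain ⟨v, hv, -, -, hvav⟩ := ih C.ncard hCcard G C a le_rfl ha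
            ⟨b, hb, Ne.symm hab, hnadj⟩
          exact ⟨v, hv, hvav⟩
      have hvX : v ∈ X := hCX hvC
      refine ⟨v, hCA hvC, hvX.2.1, hvX.2.2, ?_⟩
      intro x y hxA hyA hvx hvy hxy hxynadj
      have hwcn : w ∈ A \ cN G v := by
        refine ⟨hw, ?_⟩
        rintro (h | h)
        · exact hvX.2.1 h.symm
        · exact hvX.2.2 h.symm
      have hxSC := hNv v hvC x hxA hvx
      have hySC := hNv v hvC y hyA hvy
      rcases (Set.mem_union _ _ _).mp hxSC with hxS | hxC <;>
        rcases (Set.mem_union _ _ _).mp hySC with hyS | hyC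
      · have e1 : (gRes G (insert x (insert y (A \ cN G v)))).Adj x w :=
          ⟨hxS.2.1.symm, Set.mem_insert _ _,
            Set.mem_insert_of_mem _ (Set.mem_insert_of_mem _ hwcn)⟩
        have e2 : (gRes G (insert x (insert y (A \ cN G v)))).Adj w y :=
          ⟨hyS.2.1, Set.mem_insert_of_mem _ (Set.mem_insert_of_mem _ hwcn),
            Set.mem_insert_of_mem _ (Set.mem_insert _ _)⟩
        exact e1.reachable.trans e2.reachable
      · exact absurd (hS0 x hxS y hyC) hxynadj
      · exact absurd (hS0 y hyS x hxC).symm hxynadj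
      · have hr := hvav x y hxC hyC hvx hvy hxy hxynadj
        have hsub : insert x (insert y (C \ cN G v)) ⊆ insert x (insert y (A \ cN G v)) :=
          Set.insert_subset_insert (Set.insert_subset_insert (Set.diff_subset_diff_left hCA))
        exact SimpleGraph.Reachable.mono (gRes_mono hsub) hr
  · -- W ⊊ A
    have hlt : W.ncard < n := by
      have h1 : W.ncard < A.ncard := Set.ncard_lt_ncard (lt_of_le_not_ge hWA hAW) A.toFinite
      omega
    obtain ⟨v, hvW, hvw, hvadj, hvav⟩ := ih W.ncard hlt G W w le_rfl (Set.mem_insert _ _)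
      ⟨u, Set.mem_insert_of_mem _ (Set.mem_union_right _ huC), huw, hwu⟩
    have hvC : v ∈ C := by
      rcases Set.mem_insert_iff.mp hvW with h | h
      · exact absurd h hvw
      rcases (Set.mem_union _ _ _).mp h with h | h
      · exact absurd h.2.1 hvadj
      · exact h
    refine ⟨v, hWA hvW, hvw, hvadj, ?_⟩
    intro x y hxA hyA hvx hvy hxy hxynadj
    have hxW : x ∈ W := Set.mem_insert_of_mem _ (hNv v hvC x hxA hvx)
    have hyW : y ∈ W := Set.mem_insert_of_mem _ (hNv v hvC y hyA hvy)
    have hr := hvav x y hxW hyW hvx hvy hxy hxynadj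
    have hsub : insert x (insert y (W \ cN G v)) ⊆ insert x (insert y (A \ cN G v)) :=
      Set.insert_subset_insert (Set.insert_subset_insert (Set.diff_subset_diff_left hWA))
    exact SimpleGraph.Reachable.mono (gRes_mono hsub) hr

private lemma main_aux [Fintype V] (G : SimpleGraph V) (A : Set V) (hA : A.Nonempty) :
    ∃ v ∈ A, AvoidIn G A v := by
  classical
  by_cases h : ∃ w, w ∈ A ∧ ∃ u, u ∈ A ∧ u ≠ w ∧ ¬ G.Adj w u
  · obtain ⟨w, hw, hexu⟩ := h
    obtain ⟨v, hvA, -, -, hvav⟩ := claim_aux A.ncard G A w le_rfl hw hexu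
    exact ⟨v, hvA, hvav⟩
  · push_neg at h
    obtain ⟨a, ha⟩ := hA
    exact ⟨a, ha, fun x y hx hy _ _ hxy hnadj => absurd (h x hx y hy (Ne.symm hxy)) hnadj⟩


/-- Every finite nonempty graph has an avoidable vertex. -/
theorem stmt0 [Fintype V] [Nonempty V] (G : SimpleGraph V) :
    ∃ v : V, AvoidableVertex G v := by
  obtain ⟨v, -, hv⟩ := main_aux G Set.univ Set.univ_nonempty
  exact ⟨v, fun x y hxv hvy hxy hnadj =>
    exists_induced_cycle_fn hv (Set.mem_univ x) (Set.mem_univ y) hxv.symm hvy hxy hnadj⟩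
end

section
/- Every finite graph with at least one edge has an avoidable edge. -/
variable {V : Type*}

/-- An edge `uv` is avoidable if every induced `P₄` with middle edge `uv` lies on an
induced cycle. -/
def AvoidableEdge (G : SimpleGraph V) (u v : V) : Prop :=
  G.Adj u v ∧ ∀ x y : V, IsInducedPathOn G 4 ![x, u, v, y] → InInducedCycle G ![x, u, v, y]


namespace AvoidAux

/-- Walks within a predicate `P`. -/
inductive Wlk (G : SimpleGraph V) (P : V → Prop) : V → V → Prop
  | refl (a : V) (ha : P a) : Wlk G P a a
  | tail {a b c : V} (h : Wlk G P a b) (hbc : G.Adj b c) (hc : P c) : Wlk G P a c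

namespace Wlk

variable {G : SimpleGraph V} {P Q : V → Prop} {a b c : V}

lemma left (h : Wlk G P a b) : P a := by induction h with
  | refl ha => exact ha
  | tail h hbc hc ih => exact ih

lemma right (h : Wlk G P a b) : P b := by induction h with
  | refl ha => exact ha
  | tail h hbc hc ih => exact hc

lemma mono (hPQ : ∀ v, P v → Q v) (h : Wlk G P a b) : Wlk G Q a b := by
  induction h with
  | refl ha => exact refl _ (hPQ _ ha)
  | tail h hbc hc ih => exact tail ih hbc (hPQ _ hc)

lemma trans (h1 : Wlk G P a b) (h2 : Wlk G P b c) : Wlk G P a c := by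
  induction h2 with
  | refl ha => exact h1
  | tail h hbc hc ih => exact tail ih hbc hc

lemma single (hab : G.Adj a b) (ha : P a) (hb : P b) : Wlk G P a b :=
  tail (refl a ha) hab hb

lemma symm (h : Wlk G P a b) : Wlk G P b a := by
  induction h with
  | refl ha => exact refl _ ha
  | tail h hbc hc ih => exact trans (single hbc.symm hc h.right) ih

/-- Convert a walk to a list. -/
lemma toList (h : Wlk G P a b) :
    ∃ l : List V, l.Chain' G.Adj ∧ (∀ v ∈ l, P v) ∧ l.head? = some a ∧ l.getLast? = some b := by
  induction h with
  | refl ha => exact ⟨[_], List.isChain_singleton _, by simpa using ha, rfl, rfl⟩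
  | @tail b c h hbc hc ih =>
    obtain ⟨l, hch, hP, hh, hl⟩ := ih
    refine ⟨l ++ [c], ?_, ?_, ?_, ?_⟩
    · refine List.isChain_append.mpr ?_
      refine ⟨hch, by simp, ?_⟩
      intro x hx y hy
      simp only [List.head?_cons, Option.mem_def, Option.some.injEq] at hy
      rw [hl] at hx
      simp only [Option.mem_def, Option.some.injEq] at hx
      subst hx; subst hy; exact hbc
    · intro v hv
      rcases List.mem_append.mp hv with hv | hv
      · exact hP v hv
      · simp only [List.mem_singleton] at hv; subst hv; exact hc
    · rcases l with _ | ⟨x, t⟩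
      · simp at hh
      · simpa using hh
    · simp
end Wlk

lemma getLast?_take {l : List V} {i : ℕ} (hi : i < l.length) :
    (l.take (i+1)).getLast? = some (l[i]'hi) := by
  have hlen : (l.take (i+1)).length = i + 1 := by
    rw [List.length_take]; omega
  rw [List.getLast?_eq_getElem?, hlen]
  simp only [Nat.add_sub_cancel]
  rw [List.getElem?_eq_getElem (by omega)]
  congr 1
  exact List.getElem_take

lemma head?_drop {l : List V} {j : ℕ} (hj : j < l.length) :
    (l.drop j).head? = some (l[j]'hj) := by
  rw [List.head?_eq_getElem?]
  rw [List.getElem?_eq_getElem (by rw [List.length_drop]; omega)]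
  congr 1
  rw [List.getElem_drop]
  congr 1

lemma getLast?_drop' {l : List V} {j : ℕ} (hj : j < l.length) :
    (l.drop j).getLast? = l.getLast? := by
  have h1 : l.drop j ≠ [] := by
    intro h; rw [List.drop_eq_nil_iff] at h; omega
  rw [List.getLast?_eq_getElem?, List.getLast?_eq_getElem?]
  rw [List.length_drop]
  rw [List.getElem?_eq_getElem (by rw [List.length_drop]; omega),
      List.getElem?_eq_getElem (by omega)]
  congr 1
  rw [List.getElem_drop]
  congr 1
  omega

lemma chain'_parts {R : V → V → Prop} {l : List V} (h : List.Chain' R l) (k : ℕ) :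
    List.Chain' R (l.take k) ∧ List.Chain' R (l.drop k) := by
  have := List.isChain_append.mp (by rw [List.take_append_drop]; exact h :
    List.Chain' R (l.take k ++ l.drop k))
  exact ⟨this.1, this.2.1⟩

lemma chain'_adj {R : V → V → Prop} {l : List V} (h : List.Chain' R l) {i : ℕ}
    (hi : i + 1 < l.length) : R (l[i]'(by omega)) (l[i+1]'hi) := by
  have := List.isChain_iff_getElem.mp h i (by omega)
  simpa [List.get_eq_getElem] using this

lemma gel {l : List V} {i j : ℕ} (h : i = j) (hi : i < l.length) :
    l[i]'hi = l[j]'(h ▸ hi) := by subst h; rfl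

lemma list_extract {G : SimpleGraph V} {P : V → Prop} :
    ∀ (n : ℕ) (l : List V) (a b : V), l.length ≤ n → l.Chain' G.Adj → (∀ v ∈ l, P v) →
    l.head? = some a → l.getLast? = some b →
    ∃ (m : ℕ) (f : Fin (m+1) → V), f 0 = a ∧ f (Fin.last m) = b ∧ (∀ i, P (f i)) ∧
      Function.Injective f ∧
      (∀ i j : Fin (m+1), G.Adj (f i) (f j) ↔ (i.val + 1 = j.val ∨ j.val + 1 = i.val)) := by
  intro n
  induction n with
  | zero =>
    intro l a b hlen _ _ hh _
    have : l = [] := List.length_eq_zero_iff.mp (by omega)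
    subst this; simp at hh
  | succ n ih =>
    intro l a b hlen hch hP hh hl
    have hne : l ≠ [] := by intro h; subst h; simp at hh
    have hpos : 0 < l.length := List.length_pos_iff.mpr hne
    by_cases hdef : ∃ (i j : ℕ) (hi : i < l.length) (hj : j < l.length), i + 2 ≤ j ∧
        (l[i]'hi = l[j]'hj ∨ G.Adj (l[i]'hi) (l[j]'hj))
    · obtain ⟨i, j, hi, hj, hij, hd⟩ := hdef
      rcases hd with hd | hd
      · -- equal: cut out (i, j]
        have hlen' : (l.take (i+1) ++ l.drop (j+1)).length = (i+1) + (l.length - (j+1)) := by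
          rw [List.length_append, List.length_take, List.length_drop]; omega
        have hlink : ∀ x ∈ (l.take (i+1)).getLast?, ∀ y ∈ (l.drop (j+1)).head?, G.Adj x y := by
          intro x hx y hy
          have hj1 : j + 1 < l.length := by
            by_contra hc
            have : l.drop (j+1) = [] := List.drop_eq_nil_iff.mpr (by omega)
            rw [this] at hy; simp at hy
          rw [getLast?_take hi] at hx
          rw [head?_drop hj1] at hy
          simp only [Option.mem_def, Option.some.injEq] at hx hy
          subst hx; subst hy
          rw [hd]
          exact chain'_adj hch hj1
        refine ih (l.take (i+1) ++ l.drop (j+1)) a b (by omega) ?_ ?_ ?_ ?_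
        · refine List.isChain_append.mpr ?_
          exact ⟨(chain'_parts hch (i+1)).1, (chain'_parts hch (j+1)).2, hlink⟩
        · intro v hv
          rcases List.mem_append.mp hv with hv | hv
          · exact hP v (List.take_subset _ _ hv)
          · exact hP v (List.drop_subset _ _ hv)
        · rw [List.head?_eq_getElem?, List.getElem?_append_left (by rw [List.length_take]; omega)]
          rw [List.head?_eq_getElem?] at hh
          rw [List.getElem?_eq_getElem (by rw [List.length_take]; omega)]
          rw [List.getElem?_eq_getElem hpos] at hh
          rw [← hh]
          congr 1
          exact List.getElem_take
        · by_cases hj1 : j + 1 < l.length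
          · rw [List.getLast?_append_of_ne_nil _ (by
              intro h; rw [List.drop_eq_nil_iff] at h; omega)]
            rw [getLast?_drop' hj1]; exact hl
          · have hdrop : l.drop (j+1) = [] := List.drop_eq_nil_iff.mpr (by omega)
            have hjlast : j = l.length - 1 := by omega
            rw [hdrop, List.append_nil, getLast?_take hi]
            rw [List.getLast?_eq_getElem?, List.getElem?_eq_getElem (by omega)] at hl
            rw [← hl, hd]
            exact congrArg some (gel hjlast hj)
      · -- chord: cut out (i, j)
        have hlink : ∀ x ∈ (l.take (i+1)).getLast?, ∀ y ∈ (l.drop j).head?, G.Adj x y := by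
          intro x hx y hy
          rw [getLast?_take hi] at hx
          rw [head?_drop hj] at hy
          simp only [Option.mem_def, Option.some.injEq] at hx hy
          subst hx; subst hy; exact hd
        refine ih (l.take (i+1) ++ l.drop j) a b
          (by rw [List.length_append, List.length_take, List.length_drop]; omega) ?_ ?_ ?_ ?_
        · refine List.isChain_append.mpr ?_
          exact ⟨(chain'_parts hch (i+1)).1, (chain'_parts hch j).2, hlink⟩
        · intro v hv
          rcases List.mem_append.mp hv with hv | hv
          · exact hP v (List.take_subset _ _ hv)
          · exact hP v (List.drop_subset _ _ hv)
        · rw [List.head?_eq_getElem?, List.getElem?_append_left (by rw [List.length_take]; omega)]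
          rw [List.head?_eq_getElem?] at hh
          rw [List.getElem?_eq_getElem (by rw [List.length_take]; omega)]
          rw [List.getElem?_eq_getElem hpos] at hh
          rw [← hh]
          congr 1
          exact List.getElem_take
        · rw [List.getLast?_append_of_ne_nil _ (by
            intro h; rw [List.drop_eq_nil_iff] at h; omega)]
          rw [getLast?_drop' hj]; exact hl
    · -- no defect: l is an induced path
      push_neg at hdef
      refine ⟨l.length - 1, fun k => l[k.val]'(by omega), ?_, ?_, ?_, ?_, ?_⟩
      · rw [List.head?_eq_getElem?, List.getElem?_eq_getElem hpos] at hh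
        exact Option.some_injective _ hh
      · rw [List.getLast?_eq_getElem?, List.getElem?_eq_getElem (by omega)] at hl
        simp only [Fin.val_last]
        exact Option.some_injective _ hl
      · intro i; exact hP _ (List.getElem_mem _)
      · have key : ∀ (i j : ℕ) (hi : i < l.length) (hj : j < l.length), i + 1 = j →
            G.Adj (l[i]'hi) (l[j]'hj) := by
          intro i j hi hj h
          subst h
          exact chain'_adj hch hj
        intro i j hij
        simp only at hij
        by_contra hne
        have hne' : i.val ≠ j.val := fun h => hne (Fin.ext h)
        rcases Nat.lt_or_ge i.val j.val with h | h
        · rcases Nat.lt_or_ge (i.val + 1) j.val with h2 | h2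
          · exact (hdef i.val j.val (by omega) (by omega) (by omega)).1 hij
          · exact G.ne_of_adj (key i.val j.val (by omega) (by omega) (by omega)) hij
        · rcases Nat.lt_or_ge (j.val + 1) i.val with h2 | h2
          · exact (hdef j.val i.val (by omega) (by omega) (by omega)).1 hij.symm
          · exact G.ne_of_adj (key j.val i.val (by omega) (by omega) (by omega)) hij.symm
      · have key : ∀ (i j : ℕ) (hi : i < l.length) (hj : j < l.length), i + 1 = j →
            G.Adj (l[i]'hi) (l[j]'hj) := by
          intro i j hi hj h
          subst h
          exact chain'_adj hch hj
        intro i j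
        constructor
        · intro hadj
          rcases Nat.lt_or_ge i.val j.val with h | h
          · left
            by_contra h2
            exact (hdef i.val j.val (by omega) (by omega) (by omega)).2 hadj
          · rcases Nat.lt_or_ge j.val i.val with h3 | h3
            · right
              by_contra h2
              exact (hdef j.val i.val (by omega) (by omega) (by omega)).2 hadj.symm
            · have hij' : i = j := Fin.ext (by omega)
              subst hij'
              exact absurd hadj (G.irrefl)
        · intro hc
          rcases hc with hc | hc
          · exact key i.val j.val (by omega) (by omega) hc
          · exact (key j.val i.val (by omega) (by omega) hc).symm

lemma p4_facts {G : SimpleGraph V} {x p q y : V} (h : IsInducedPathOn G 4 ![x,p,q,y]) :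
    G.Adj x p ∧ G.Adj p q ∧ G.Adj q y ∧ ¬G.Adj x q ∧ ¬G.Adj x y ∧ ¬G.Adj p y ∧
    x ≠ p ∧ x ≠ q ∧ x ≠ y ∧ p ≠ q ∧ p ≠ y ∧ q ≠ y := by
  obtain ⟨hinj, hadj⟩ := h
  refine ⟨(hadj 0 1).mpr (by decide), (hadj 1 2).mpr (by decide), (hadj 2 3).mpr (by decide),
    fun hc => by have := (hadj 0 2).mp hc; revert this; decide,
    fun hc => by have := (hadj 0 3).mp hc; revert this; decide,
    fun hc => by have := (hadj 1 3).mp hc; revert this; decide,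
    fun hc => absurd (hinj (a₁ := 0) (a₂ := 1) hc) (by decide),
    fun hc => absurd (hinj (a₁ := 0) (a₂ := 2) hc) (by decide),
    fun hc => absurd (hinj (a₁ := 0) (a₂ := 3) hc) (by decide),
    fun hc => absurd (hinj (a₁ := 1) (a₂ := 2) hc) (by decide),
    fun hc => absurd (hinj (a₁ := 1) (a₂ := 3) hc) (by decide),
    fun hc => absurd (hinj (a₁ := 2) (a₂ := 3) hc) (by decide)⟩

lemma p4_mk {G : SimpleGraph V} {x p q y : V}
    (hxp : G.Adj x p) (hpq : G.Adj p q) (hqy : G.Adj q y)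
    (hxq : ¬G.Adj x q) (hxy : ¬G.Adj x y) (hpy : ¬G.Adj p y)
    (hxyne : x ≠ y) :
    IsInducedPathOn G 4 ![x,p,q,y] := by
  have hxpne := G.ne_of_adj hxp
  have hpqne := G.ne_of_adj hpq
  have hqyne := G.ne_of_adj hqy
  have hxqne : x ≠ q := fun h => hxy (h ▸ hqy)
  have hpyne : p ≠ y := fun h => hxy (h ▸ hxp)
  constructor
  · intro i j hij
    fin_cases i <;> fin_cases j <;> first
      | rfl
      | (exfalso; simp only [Matrix.cons_val_zero, Matrix.cons_val_one, Matrix.head_cons,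
          Matrix.cons_val_two, Matrix.tail_cons, Matrix.cons_val_three] at hij; simp_all)
  · intro i j
    fin_cases i <;> fin_cases j <;>
      simp only [Matrix.cons_val_zero, Matrix.cons_val_one, Matrix.head_cons,
        Matrix.cons_val_two, Matrix.tail_cons, Matrix.cons_val_three, Fin.val_zero,
        Fin.val_one, Fin.val_two, Fin.mk_zero, Fin.mk_one] <;>
      norm_num <;>
      first
        | exact G.irrefl
        | exact hxp | exact hxp.symm | exact hpq | exact hpq.symm
        | exact hqy | exact hqy.symm
        | exact hxq | exact fun hc => hxq hc.symm
        | exact hxy | exact fun hc => hxy hc.symm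
        | exact hpy | exact fun hc => hpy hc.symm

lemma p4_rev {G : SimpleGraph V} {x p q y : V} (h : IsInducedPathOn G 4 ![x,p,q,y]) :
    IsInducedPathOn G 4 ![y,q,p,x] := by
  obtain ⟨hxp, hpq, hqy, hxq, hxy, hpy, h1, h2, h3, h4, h5, h6⟩ := p4_facts h
  exact p4_mk hqy.symm hpq.symm hxp.symm (fun hc => hpy hc.symm)
    (fun hc => hxy hc.symm) (fun hc => hxq hc.symm) (Ne.symm h3)

lemma cyc_sub {G : SimpleGraph V} {k k' : ℕ} {q1 : Fin k → V} {q2 : Fin k' → V}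
    (h : InInducedCycle G q1) (hsub : Set.range q2 ⊆ Set.range q1) :
    InInducedCycle G q2 := by
  obtain ⟨n, c, hc, hr⟩ := h
  exact ⟨n, c, hc, hsub.trans hr⟩

lemma range_rev {x p q y : V} : Set.range ![y,q,p,x] ⊆ Set.range ![x,p,q,y] := by
  rintro v ⟨i, rfl⟩
  fin_cases i
  · exact ⟨3, rfl⟩
  · exact ⟨2, rfl⟩
  · exact ⟨1, rfl⟩
  · exact ⟨0, rfl⟩

lemma induce_cycle {G : SimpleGraph V} {A : Set V} {k : ℕ} {qv : Fin k → A}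
    (h : InInducedCycle (G.induce A) qv) : InInducedCycle G (fun i => (qv i : V)) := by
  obtain ⟨n, c, ⟨h3, hinj, hadj⟩, hr⟩ := h
  refine ⟨n, fun i => (c i : V), ⟨h3, ?_, fun i j => hadj i j⟩, ?_⟩
  · intro i j hij
    exact hinj (Subtype.val_injective hij)
  · rintro v ⟨i, rfl⟩
    obtain ⟨j, hj⟩ := hr ⟨i, rfl⟩
    exact ⟨j, congrArg Subtype.val hj⟩

/-- Build an induced cycle through an induced `P₄` from an induced connecting path. -/
lemma cycle_of_path {G : SimpleGraph V} {x p q y : V} (hP4 : IsInducedPathOn G 4 ![x,p,q,y])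
    {m : ℕ} (f : Fin (m+1) → V) (hm : 2 ≤ m) (hf0 : f 0 = x) (hfl : f (Fin.last m) = y)
    (hinj : Function.Injective f)
    (hiff : ∀ i j : Fin (m+1), G.Adj (f i) (f j) ↔ (i.val + 1 = j.val ∨ j.val + 1 = i.val))
    (hmid : ∀ i : Fin (m+1), 0 < i.val → i.val < m →
      (f i ≠ p ∧ f i ≠ q ∧ ¬G.Adj p (f i) ∧ ¬G.Adj q (f i))) :
    InInducedCycle G ![x,p,q,y] := by
  obtain ⟨hxp, hpq, hqy, hxq, hxy, hpy, hnxp, hnxq, hnxy, hnpq, hnpy, hnqy⟩ := p4_facts hP4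
  -- key pointwise facts about f
  have hfp : ∀ i : Fin (m+1), f i ≠ p := by
    intro i
    rcases Nat.eq_zero_or_pos i.val with h0 | h0
    · have : i = 0 := Fin.ext h0
      rw [this, hf0]; exact fun hc => hnxp hc
    rcases Nat.lt_or_ge i.val m with hlt | hge
    · exact (hmid i h0 hlt).1
    · have : i = Fin.last m := Fin.ext (by rw [Fin.val_last]; omega)
      rw [this, hfl]; exact fun hc => hnpy hc.symm
  have hfq : ∀ i : Fin (m+1), f i ≠ q := by
    intro i
    rcases Nat.eq_zero_or_pos i.val with h0 | h0
    · have : i = 0 := Fin.ext h0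
      rw [this, hf0]; exact fun hc => hnxq hc
    rcases Nat.lt_or_ge i.val m with hlt | hge
    · exact (hmid i h0 hlt).2.1
    · have : i = Fin.last m := Fin.ext (by rw [Fin.val_last]; omega)
      rw [this, hfl]; exact fun hc => hnqy hc.symm
  have hfP : ∀ i : Fin (m+1), G.Adj p (f i) ↔ i.val = 0 := by
    intro i
    rcases Nat.eq_zero_or_pos i.val with h0 | h0
    · have : i = 0 := Fin.ext h0
      rw [this, hf0]; simpa using hxp.symm
    constructor
    · intro hadj
      exfalso
      rcases Nat.lt_or_ge i.val m with hlt | hge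
      · exact (hmid i h0 hlt).2.2.1 hadj
      · have : i = Fin.last m := Fin.ext (by rw [Fin.val_last]; omega)
        rw [this, hfl] at hadj; exact hpy hadj
    · omega
  have hfQ : ∀ i : Fin (m+1), G.Adj q (f i) ↔ i.val = m := by
    intro i
    rcases Nat.lt_or_ge i.val m with hlt | hge
    · constructor
      · intro hadj
        exfalso
        rcases Nat.eq_zero_or_pos i.val with h0 | h0
        · have : i = 0 := Fin.ext h0
          rw [this, hf0] at hadj; exact hxq hadj.symm
        · exact (hmid i h0 hlt).2.2.2 hadj
      · omega
    · have : i = Fin.last m := Fin.ext (by rw [Fin.val_last]; omega)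
      rw [this, hfl]
      simpa using hqy
  -- the cycle
  have h3n : 3 ≤ m + 3 := by omega
  set c : Fin (m + 3) → V := fun i => if h0 : i.val = 0 then p else if hl : i.val = m + 2 then q
    else f ⟨i.val - 1, by omega⟩ with hcdef
  have hc0 : ∀ i : Fin (m + 3), i.val = 0 → c i = p := by
    intro i h; simp only [hcdef]; rw [dif_pos h]
  have hcl : ∀ i : Fin (m + 3), i.val = m + 2 → c i = q := by
    intro i h; simp only [hcdef]; rw [dif_neg (by omega), dif_pos h]
  have hcm : ∀ (i : Fin (m + 3)) (h1 : i.val ≠ 0) (h2 : i.val ≠ m + 2),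
      c i = f ⟨i.val - 1, by omega⟩ := by
    intro i h1 h2; simp only [hcdef]; rw [dif_neg h1, dif_neg h2]
  have h1n : 1 % (m + 3) = 1 := Nat.mod_eq_of_lt (by omega)
  have h01 : (0 + 1) % (m + 3) = 1 := h1n
  have hnn : (m + 2 + 1) % (m + 3) = 0 := Nat.mod_self _
  refine ⟨m + 3, c, ⟨h3n, ?_, ?_⟩, ?_⟩
  · -- injective
    intro i j hij
    simp only [hcdef] at hij
    split_ifs at hij with h1 h2 h3 h4 h5 h6
    · exact Fin.ext (by omega)
    · exact absurd hij hnpq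
    · exact absurd hij.symm (hfp _)
    · exact absurd hij.symm hnpq
    · exact Fin.ext (by omega)
    · exact absurd hij.symm (hfq _)
    · exact absurd hij (hfp _)
    · exact absurd hij (hfq _)
    · have h7 := hinj hij
      have h8 : i.val - 1 = j.val - 1 := congrArg Fin.val h7
      exact Fin.ext (by omega)
  · -- adjacency
    intro i j
    by_cases hi0 : i.val = 0
    · by_cases hj0 : j.val = 0
      · rw [hc0 i hi0, hc0 j hj0]
        constructor
        · intro h; exact absurd h (G.irrefl)
        · intro h; rw [hi0, hj0, h01] at h; omega
      · by_cases hjl : j.val = m + 2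
        · rw [hc0 i hi0, hcl j hjl]
          constructor
          · intro _; right; rw [hjl, hi0]; exact hnn
          · intro _; exact hpq
      -- j mid
        · rw [hc0 i hi0, hcm j hj0 hjl]
          rw [hfP]
          have hj1 : j.val + 1 < m + 3 := by omega
          have : (j.val + 1) % (m + 3) = j.val + 1 := Nat.mod_eq_of_lt hj1
          rw [hi0, this, h01]
          simp only [Fin.val_mk]
          omega
    · by_cases hil : i.val = m + 2
      · by_cases hj0 : j.val = 0
        · rw [hcl i hil, hc0 j hj0]
          constructor
          · intro _; left; rw [hil, hj0]; exact hnn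
          · intro _; exact hpq.symm
        · by_cases hjl : j.val = m + 2
          · rw [hcl i hil, hcl j hjl]
            constructor
            · intro h; exact absurd h (G.irrefl)
            · intro h; rw [hil, hjl] at h; rw [hnn] at h; omega
          · rw [hcl i hil, hcm j hj0 hjl]
            rw [hfQ]
            have : (j.val + 1) % (m + 3) = j.val + 1 := Nat.mod_eq_of_lt (by omega)
            rw [hil, this, hnn]
            simp only [Fin.val_mk]
            omega
      · by_cases hj0 : j.val = 0
        · rw [hcm i hi0 hil, hc0 j hj0]
          rw [SimpleGraph.adj_comm, hfP]
          have : (i.val + 1) % (m + 3) = i.val + 1 := Nat.mod_eq_of_lt (by omega)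
          rw [hj0, this, h01]
          simp only [Fin.val_mk]
          omega
        · by_cases hjl : j.val = m + 2
          · rw [hcm i hi0 hil, hcl j hjl]
            rw [SimpleGraph.adj_comm, hfQ]
            have : (i.val + 1) % (m + 3) = i.val + 1 := Nat.mod_eq_of_lt (by omega)
            rw [hjl, this, hnn]
            simp only [Fin.val_mk]
            omega
          · rw [hcm i hi0 hil, hcm j hj0 hjl]
            rw [hiff]
            have h8 : (i.val + 1) % (m + 3) = i.val + 1 := Nat.mod_eq_of_lt (by omega)
            have h9 : (j.val + 1) % (m + 3) = j.val + 1 := Nat.mod_eq_of_lt (by omega)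
            rw [h8, h9]
            simp only [Fin.val_mk]
            omega
  · -- range
    rintro v ⟨t, rfl⟩
    fin_cases t
    · refine ⟨(⟨1, by omega⟩ : Fin (m + 3)), ?_⟩
      rw [hcm (⟨1, by omega⟩ : Fin (m + 3)) (by simp) (by simp)]
      exact hf0
    · exact ⟨(⟨0, by omega⟩ : Fin (m + 3)), hc0 _ rfl⟩
    · exact ⟨(⟨m + 2, by omega⟩ : Fin (m + 3)), hcl _ rfl⟩
    · refine ⟨(⟨m + 1, by omega⟩ : Fin (m + 3)), ?_⟩
      rw [hcm (⟨m + 1, by omega⟩ : Fin (m + 3)) (by simp) (by simp)]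
      exact hfl

/-- first-exit lemma -/
lemma Wlk.exit {G : SimpleGraph V} {P : V → Prop} {Wset : Set V} {a v : V}
    (h : Wlk G P a v) (hv : v ∉ Wset) :
    a ∉ Wset ∨ ∃ b c, c ∈ Wset ∧ b ∉ Wset ∧ G.Adj c b ∧ Wlk G P a b := by
  induction h with
  | refl ha => exact Or.inl hv
  | @tail b c h hbc hc ih =>
    by_cases hb : b ∈ Wset
    · exact Or.inr ⟨c, b, hb, hv, hbc, Wlk.tail h hbc hc⟩
    · rcases ih hb with h' | h'
      · exact Or.inl h'
      · exact Or.inr h'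

section Graph

variable {G : SimpleGraph V}

def Aset (G : SimpleGraph V) (W : Finset V) : Set V :=
  {v | v ∉ W ∧ ∀ w ∈ W, ¬ G.Adj v w}

def NE (G : SimpleGraph V) (p q : V) : Set V :=
  {z | z = p ∨ z = q ∨ G.Adj p z ∨ G.Adj q z}

def Dset (G : SimpleGraph V) (W : Finset V) (p q : V) : Set V :=
  {v | ∃ w₀ ∈ W, Wlk G (fun z => z ∉ NE G p q) w₀ v}

def Seer (G : SimpleGraph V) (W : Finset V) (p q x : V) : Prop :=
  ∃ d ∈ Dset G W p q, G.Adj x d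

def WConn (G : SimpleGraph V) (W : Finset V) : Prop :=
  ∀ a ∈ W, ∀ b ∈ W, Wlk G (fun z => z ∈ W) a b

def Covering (G : SimpleGraph V) (W : Finset V) : Prop :=
  ∀ s a b : V, s ∉ W → (∃ c ∈ W, G.Adj c s) → a ∈ Aset G W → b ∈ Aset G W →
    G.Adj a b → ¬G.Adj s a → ¬G.Adj s b → False

variable {W : Finset V} {p q x y : V}

lemma NE_comm : NE G p q = NE G q p := by
  ext z; simp only [NE, Set.mem_setOf_eq]; tauto

lemma Dset_comm : Dset G W p q = Dset G W q p := by
  unfold Dset; rw [NE_comm]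

lemma mem_W_not_NE (hp : p ∈ Aset G W) (hq : q ∈ Aset G W) :
    ∀ w ∈ W, w ∉ NE G p q := by
  intro w hw hmem
  rcases hmem with h | h | h | h
  · exact hp.1 (h ▸ hw)
  · exact hq.1 (h ▸ hw)
  · exact hp.2 w hw h
  · exact hq.2 w hw h

lemma W_sub_D (hp : p ∈ Aset G W) (hq : q ∈ Aset G W) :
    ∀ w ∈ W, w ∈ Dset G W p q := fun w hw =>
  ⟨w, hw, Wlk.refl w (mem_W_not_NE hp hq w hw)⟩

lemma D_not_NE {v : V} (hv : v ∈ Dset G W p q) : v ∉ NE G p q := by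
  obtain ⟨w₀, hw₀, hwlk⟩ := hv
  exact hwlk.right

lemma nonseer_mem_Aset (hp : p ∈ Aset G W) (hq : q ∈ Aset G W)
    (hxp : G.Adj x p) (hns : ¬ Seer G W p q x) : x ∈ Aset G W := by
  constructor
  · intro hxW
    exact hp.2 x hxW hxp.symm
  · intro w hw hadj
    exact hns ⟨w, W_sub_D hp hq w hw, hadj⟩

lemma D_shift (hp : p ∈ Aset G W) (hq : q ∈ Aset G W) (hqy : G.Adj q y)
    (hyns : ¬ Seer G W p q y) : Dset G W p q ⊆ Dset G W q y := by
  rintro v ⟨w₀, hw₀, hwlk⟩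
  refine ⟨w₀, hw₀, ?_⟩
  have hyA : y ∈ Aset G W := nonseer_mem_Aset hq hp hqy.symm (by
    intro ⟨d, hd, hadj⟩
    rw [Dset_comm] at hd
    exact hyns ⟨d, hd, hadj⟩)
  induction hwlk with
  | refl ha =>
    exact Wlk.refl _ (mem_W_not_NE hq hyA _ hw₀)
  | @tail b c h hbc hc ih =>
    refine Wlk.tail ih hbc ?_
    intro hmem
    rcases hmem with h' | h' | h' | h'
    · exact hc (Or.inr (Or.inl h'))
    · subst h'
      exact hyns ⟨b, ⟨w₀, hw₀, h⟩, hbc.symm⟩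
    · exact hc (Or.inr (Or.inr (Or.inr h')))
    · exact hyns ⟨c, ⟨w₀, hw₀, Wlk.tail h hbc hc⟩, h'⟩

lemma seer_shift (hp : p ∈ Aset G W) (hq : q ∈ Aset G W) (hqy : G.Adj q y)
    (hyns : ¬ Seer G W p q y) (hxs : Seer G W p q x)
    (hxq : ¬ G.Adj q x) (hxq' : x ≠ q) (hxy : ¬ G.Adj y x) (hxy' : x ≠ y) :
    x ∈ Dset G W q y := by
  obtain ⟨d, hd, hadj⟩ := hxs
  obtain ⟨w₀, hw₀, hwlk⟩ := D_shift hp hq hqy hyns hd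
  refine ⟨w₀, hw₀, Wlk.tail hwlk hadj.symm ?_⟩
  intro hmem
  rcases hmem with h' | h' | h' | h'
  · exact hxq' h'
  · exact hxy' h'
  · exact hxq h'
  · exact hxy h'

end Graph

lemma wlk_induced {G : SimpleGraph V} {P : V → Prop} {a b : V} (h : Wlk G P a b) :
    ∃ (m : ℕ) (f : Fin (m+1) → V), f 0 = a ∧ f (Fin.last m) = b ∧ (∀ i, P (f i)) ∧
      Function.Injective f ∧
      (∀ i j : Fin (m+1), G.Adj (f i) (f j) ↔ (i.val + 1 = j.val ∨ j.val + 1 = i.val)) := by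
  obtain ⟨l, hch, hP, hh, hl⟩ := h.toList
  exact list_extract l.length l a b le_rfl hch hP hh hl

section Graph2

variable {G : SimpleGraph V} {W : Finset V} {p q x y : V}

lemma bothseer_cycle (hconn : WConn G W) (hp : p ∈ Aset G W) (hq : q ∈ Aset G W)
    (hP4 : IsInducedPathOn G 4 ![x, p, q, y])
    (hx : Seer G W p q x) (hy : Seer G W p q y) :
    InInducedCycle G ![x, p, q, y] := by
  obtain ⟨hxp, hpq, hqy, hxq, hxy, hpy, hnxp, hnxq, hnxy, hnpq, hnpy, hnqy⟩ := p4_facts hP4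
  set P : V → Prop := fun z => (z = x ∨ z = y) ∨ z ∉ NE G p q with hPdef
  have hmono : ∀ v, v ∉ NE G p q → P v := fun v hv => Or.inr hv
  have hmonoW : ∀ v, v ∈ (W : Set V) → P v := fun v hv =>
    Or.inr (mem_W_not_NE hp hq v hv)
  obtain ⟨d₁, hd₁, hxd₁⟩ := hx
  obtain ⟨d₂, hd₂, hyd₂⟩ := hy
  obtain ⟨w₁, hw₁, wlk₁⟩ := hd₁
  obtain ⟨w₂, hw₂, wlk₂⟩ := hd₂
  have hPx : P x := Or.inl (Or.inl rfl)
  have hPy : P y := Or.inl (Or.inr rfl)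
  have hwalk : Wlk G P x y :=
    ((Wlk.single hxd₁ hPx (hmono _ wlk₁.right)).trans
      ((wlk₁.symm.mono hmono).trans
        (((hconn w₁ hw₁ w₂ hw₂).mono (fun v hv => hmonoW v hv)).trans
          ((wlk₂.mono hmono).trans
            (Wlk.single hyd₂.symm (hmono _ wlk₂.right) hPy)))))
  obtain ⟨m, f, hf0, hfl, hfP, hfinj, hfiff⟩ := wlk_induced hwalk
  have hm : 2 ≤ m := by
    rcases Nat.lt_or_ge m 2 with hlt | hge
    · exfalso
      interval_cases m
      · exact hnxy (hf0 ▸ hfl ▸ rfl)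
      · have : G.Adj (f 0) (f (Fin.last 1)) := (hfiff 0 (Fin.last 1)).mpr (Or.inl rfl)
        rw [hf0, hfl] at this
        exact hxy this
    · exact hge
  refine cycle_of_path hP4 f hm hf0 hfl hfinj hfiff ?_
  intro i h0 hm'
  have hne0 : f i ≠ x := by
    intro hc
    have := hfinj (hc.trans hf0.symm)
    rw [this] at h0
    simp at h0
  have hnel : f i ≠ y := by
    intro hc
    have := hfinj (hc.trans hfl.symm)
    rw [this] at hm'
    simp at hm'
  have hiP := hfP i
  rcases hiP with (hc | hc) | hc
  · exact absurd hc hne0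
  · exact absurd hc hnel
  · refine ⟨?_, ?_, ?_, ?_⟩
    · intro h'; exact hc (Or.inl h')
    · intro h'; exact hc (Or.inr (Or.inl h'))
    · intro h'; exact hc (Or.inr (Or.inr (Or.inl h')))
    · intro h'; exact hc (Or.inr (Or.inr (Or.inr h')))

/-- one shift step -/
lemma shift_step (hp : p ∈ Aset G W) (hq : q ∈ Aset G W)
    (hP4 : IsInducedPathOn G 4 ![x, p, q, y])
    (hsx : Seer G W p q x) (hsy : ¬ Seer G W p q y) :
    y ∈ Aset G W ∧ G.Adj q y ∧ x ∈ Dset G W q y ∧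
      Dset G W p q ⊆ Dset G W q y ∧ x ∉ Dset G W p q ∧ x ∉ W := by
  obtain ⟨hxp, hpq, hqy, hxq, hxy, hpy, hnxp, hnxq, hnxy, hnpq, hnpy, hnqy⟩ := p4_facts hP4
  have hyA : y ∈ Aset G W := nonseer_mem_Aset hq hp hqy.symm (by
    intro ⟨d, hd, hadj⟩
    rw [Dset_comm] at hd
    exact hsy ⟨d, hd, hadj⟩)
  refine ⟨hyA, hqy, ?_, D_shift hp hq hqy hsy, ?_, ?_⟩
  · exact seer_shift hp hq hqy hsy hsx (fun h => hxq h.symm) hnxq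
      (fun h => hxy h.symm) hnxy
  · intro hmem
    exact D_not_NE hmem (Or.inr (Or.inr (Or.inl hxp.symm)))
  · intro hxW
    exact hp.2 x hxW hxp.symm

variable [Fintype V]

lemma iter (hconn : WConn G W) (hcov : Covering G W) :
    ∀ (N : ℕ) (p q : V), p ∈ Aset G W → q ∈ Aset G W → G.Adj p q →
    ((∀ x y : V, x ∈ Aset G W → y ∈ Aset G W → IsInducedPathOn G 4 ![x, p, q, y] →
        InInducedCycle G ![x, p, q, y]) ∨ (∃ d ∈ Dset G W p q, d ∉ W)) →
    ((Dset G W p q)ᶜ : Set V).ncard ≤ N →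
    ∃ a b : V, a ∈ Aset G W ∧ b ∈ Aset G W ∧ AvoidableEdge G a b := by
  intro N
  induction N using Nat.strong_induction_on with
  | _ N ih =>
    intro p q hp hq hpq hyp hcard
    by_cases hav : AvoidableEdge G p q
    · exact ⟨p, q, hp, hq, hav⟩
    have hfail : ∃ x y, IsInducedPathOn G 4 ![x, p, q, y] ∧
        ¬ InInducedCycle G ![x, p, q, y] := by
      by_contra hc
      push_neg at hc
      exact hav ⟨hpq, fun x y h4 => hc x y h4⟩
    obtain ⟨x, y, hP4, hnc⟩ := hfail
    obtain ⟨hxp, hpq', hqy, hxq, hxy, hpy, hnxp, hnxq, hnxy, hnpq, hnpy, hnqy⟩ := p4_facts hP4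
    by_cases hsx : Seer G W p q x <;> by_cases hsy : Seer G W p q y
    · exact absurd (bothseer_cycle hconn hp hq hP4 hsx hsy) hnc
    · -- x seer, y not: shift to (q, y)
      obtain ⟨hyA, hqy2, hxD, hsub, hxout, hxW⟩ := shift_step hp hq hP4 hsx hsy
      have hstrict : ((Dset G W q y)ᶜ : Set V).ncard < ((Dset G W p q)ᶜ : Set V).ncard := by
        apply Set.ncard_lt_ncard
        · constructor
          · exact Set.compl_subset_compl.mpr hsub
          · intro hcc
            exact (hcc hxout : x ∈ (Dset G W q y)ᶜ) hxD
        · exact Set.toFinite _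
      exact ih (((Dset G W q y)ᶜ : Set V).ncard) (by omega) q y hq hyA hqy2
        (Or.inr ⟨x, hxD, hxW⟩) le_rfl
    · -- y seer, x not: shift to (p, x)
      have hsy2 : Seer G W q p y := by unfold Seer; rw [← Dset_comm]; exact hsy
      have hsx2 : ¬ Seer G W q p x := by unfold Seer; rw [← Dset_comm]; exact hsx
      obtain ⟨hxA, hpx, hyD, hsub, hyout, hyW⟩ :=
        shift_step (p := q) (q := p) (x := y) (y := x) hq hp (p4_rev hP4) hsy2 hsx2
      rw [Dset_comm (p := q) (q := p)] at hsub hyout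
      have hstrict : ((Dset G W p x)ᶜ : Set V).ncard < ((Dset G W p q)ᶜ : Set V).ncard := by
        apply Set.ncard_lt_ncard
        · constructor
          · exact Set.compl_subset_compl.mpr hsub
          · intro hcc
            exact (hcc hyout : y ∈ (Dset G W p x)ᶜ) hyD
        · exact Set.toFinite _
      exact ih (((Dset G W p x)ᶜ : Set V).ncard) (by omega) p x hp hxA hpx
        (Or.inr ⟨y, hyD, hyW⟩) le_rfl
    · -- neither seer
      have hxA : x ∈ Aset G W := nonseer_mem_Aset hp hq hxp hsx
      have hsy2 : ¬ Seer G W q p y := by unfold Seer; rw [← Dset_comm]; exact hsy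
      have hyA : y ∈ Aset G W := nonseer_mem_Aset hq hp hqy.symm hsy2
      rcases hyp with hHav | ⟨d, hdD, hdW⟩
      · exact absurd (hHav x y hxA hyA hP4) hnc
      · obtain ⟨w₀, hw₀, hwlk⟩ := hdD
        rcases hwlk.exit (Wset := (W : Set V)) (by simpa using hdW) with
          hout | ⟨s, c, hcW, hsW, hcs, hwlk'⟩
        · exact absurd (by simpa using hout : w₀ ∉ W) (by simp [hw₀])
        · have hsD : s ∈ Dset G W p q := ⟨w₀, hw₀, hwlk'⟩
          have hsNE := hwlk'.right
          exact absurd (hcov s x p (by simpa using hsW) ⟨c, (by simpa using hcW), hcs⟩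
            hxA hp hxp (fun h => hsx ⟨s, hsD, h.symm⟩)
            (fun h => hsNE (Or.inr (Or.inr (Or.inl h.symm))))) (fun hfalse => hfalse)

end Graph2

universe u

lemma master : ∀ (N : ℕ) (V' : Type u) [Fintype V'] (G : SimpleGraph V'),
    (∀ u₁ u₂ : V', G.Adj u₁ u₂ →
      (Fintype.card V' + 1) * (Fintype.card V' + 1) ≤ N →
      ∃ a b : V', AvoidableEdge G a b) ∧
    (∀ W : Finset V', W.Nonempty → WConn G W →
      Fintype.card V' * Fintype.card V' + (Fintype.card V' - W.card) ≤ N →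
      ∀ p q : V', p ∈ Aset G W → q ∈ Aset G W → G.Adj p q →
      ∃ a b : V', a ∈ Aset G W ∧ b ∈ Aset G W ∧ AvoidableEdge G a b) := by
  intro N
  induction N using Nat.strong_induction_on with
  | _ N ih =>
    intro V' _ G
    letI : DecidableEq V' := Classical.decEq V'
    constructor
    · -- MAIN
      intro u₁ u₂ hadj hN
      by_cases hfail : ∃ x y, IsInducedPathOn G 4 ![x, u₁, u₂, y] ∧
          ¬ InInducedCycle G ![x, u₁, u₂, y]
      · obtain ⟨x, y, hP4, hnc⟩ := hfail
        obtain ⟨hxp, hpq, hqy, hxq, hxy, hpy, hnxp, hnxq, hnxy, hnpq, hnpy, hnqy⟩ :=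
          p4_facts hP4
        have hM : Fintype.card V' * Fintype.card V' +
            (Fintype.card V' - ({y} : Finset V').card) < N := by
          have h1 : ({y} : Finset V').card = 1 := Finset.card_singleton y
          have h2 : (Fintype.card V' + 1) * (Fintype.card V' + 1) =
              Fintype.card V' * Fintype.card V' + 2 * Fintype.card V' + 1 := by ring
          omega
        have hconn : WConn G ({y} : Finset V') := by
          intro a ha b hb
          simp only [Finset.mem_singleton] at ha hb
          rw [ha, hb]
          exact Wlk.refl _ (Finset.mem_singleton_self y)
        have hxA : x ∈ Aset G ({y} : Finset V') := by
          refine ⟨by simp [hnxy], ?_⟩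
          intro w hw
          simp only [Finset.mem_singleton] at hw
          subst hw; exact hxy
        have hu₁A : u₁ ∈ Aset G ({y} : Finset V') := by
          refine ⟨by simp [hnpy], ?_⟩
          intro w hw
          simp only [Finset.mem_singleton] at hw
          subst hw; exact hpy
        obtain ⟨a, b, _, _, hav⟩ := (ih _ hM V' G).2 {y} (Finset.singleton_nonempty y) hconn
          le_rfl x u₁ hxA hu₁A hxp
        exact ⟨a, b, hav⟩
      · push_neg at hfail
        exact ⟨u₁, u₂, hadj, fun x y h4 => hfail x y h4⟩
    · -- rooted version
      intro W hWne hconn hN p q hp hq hpq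
      have hWcard : W.card < Fintype.card V' := by
        have h1 : W ⊂ Finset.univ :=
          ⟨Finset.subset_univ W, fun hsub => hp.1 (hsub (Finset.mem_univ p))⟩
        simpa [Finset.card_univ] using Finset.card_lt_card h1
      by_cases hgrow : ∃ s a b : V', s ∉ W ∧ (∃ c ∈ W, G.Adj c s) ∧ a ∈ Aset G W ∧
          b ∈ Aset G W ∧ G.Adj a b ∧ ¬G.Adj s a ∧ ¬G.Adj s b
      · obtain ⟨s, a, b, hsW, hsnbr, haA, hbA, hab, hsa, hsb⟩ := hgrow
        obtain ⟨c₀, hc₀, hc₀s⟩ := hsnbr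
        have hM : Fintype.card V' * Fintype.card V' +
            (Fintype.card V' - (insert s W).card) < N := by
          have h1 : (insert s W).card = W.card + 1 := Finset.card_insert_of_notMem hsW
          omega
        have hconn' : WConn G (insert s W) := by
          intro c hc d hd
          rcases Finset.mem_insert.mp hc with hc' | hc' <;>
            rcases Finset.mem_insert.mp hd with hd' | hd'
          · subst hc'; subst hd'
            exact Wlk.refl _ (Finset.mem_insert_self _ _)
          · subst hc'
            exact Wlk.trans
              (Wlk.single hc₀s.symm (Finset.mem_insert_self _ _)
                (Finset.mem_insert_of_mem hc₀))
              ((hconn c₀ hc₀ d hd').mono (fun v hv => Finset.mem_insert_of_mem hv))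
          · subst hd'
            exact Wlk.trans
              ((hconn c hc' c₀ hc₀).mono (fun v hv => Finset.mem_insert_of_mem hv))
              (Wlk.single hc₀s (Finset.mem_insert_of_mem hc₀) (Finset.mem_insert_self _ _))
          · exact (hconn c hc' d hd').mono (fun v hv => Finset.mem_insert_of_mem hv)
        have hane : a ≠ s := by
          intro h; subst h; exact haA.2 c₀ hc₀ hc₀s.symm
        have hbne : b ≠ s := by
          intro h; subst h; exact hbA.2 c₀ hc₀ hc₀s.symm
        have haA' : a ∈ Aset G (insert s W) := by
          constructor
          · intro h
            rcases Finset.mem_insert.mp h with h' | h'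
            · exact hane h'
            · exact haA.1 h'
          · intro w hw
            rcases Finset.mem_insert.mp hw with h' | h'
            · subst h'; exact fun hadj => hsa hadj.symm
            · exact haA.2 w h'
        have hbA' : b ∈ Aset G (insert s W) := by
          constructor
          · intro h
            rcases Finset.mem_insert.mp h with h' | h'
            · exact hbne h'
            · exact hbA.1 h'
          · intro w hw
            rcases Finset.mem_insert.mp hw with h' | h'
            · subst h'; exact fun hadj => hsb hadj.symm
            · exact hbA.2 w h'
        obtain ⟨a', b', ha', hb', hav⟩ := (ih _ hM V' G).2 (insert s W)
          ⟨s, Finset.mem_insert_self _ _⟩ hconn' le_rfl a b haA' hbA' hab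
        refine ⟨a', b', ⟨fun h => ha'.1 (Finset.mem_insert_of_mem h),
          fun w hw => ha'.2 w (Finset.mem_insert_of_mem hw)⟩,
          ⟨fun h => hb'.1 (Finset.mem_insert_of_mem h),
          fun w hw => hb'.2 w (Finset.mem_insert_of_mem hw)⟩, hav⟩
      · -- covering holds
        have hcov : Covering G W := by
          intro s a b hsW hnbr haA hbA hab hsa hsb
          exact hgrow ⟨s, a, b, hsW, hnbr, haA, hbA, hab, hsa, hsb⟩
        letI : Fintype (↥(Aset G W)) := Fintype.ofFinite _
        obtain ⟨w₀, hw₀⟩ := hWne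
        have hcardA : Fintype.card (↥(Aset G W)) < Fintype.card V' := by
          apply Fintype.card_lt_of_injective_of_notMem (Subtype.val) Subtype.val_injective
            (b := w₀)
          rintro ⟨⟨v, hv⟩, rfl⟩
          exact hv.1 hw₀
        have hM : (Fintype.card (↥(Aset G W)) + 1) * (Fintype.card (↥(Aset G W)) + 1) < N := by
          have h2 : (Fintype.card (↥(Aset G W)) + 1) * (Fintype.card (↥(Aset G W)) + 1) ≤
              Fintype.card V' * Fintype.card V' := Nat.mul_le_mul hcardA hcardA
          omega
        obtain ⟨ah, bh, hav⟩ := (ih _ hM (↥(Aset G W)) (G.induce (Aset G W))).1 ⟨p, hp⟩ ⟨q, hq⟩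
          hpq le_rfl
        have hHav : ∀ x y : V', x ∈ Aset G W → y ∈ Aset G W →
            IsInducedPathOn G 4 ![x, ↑ah, ↑bh, y] → InInducedCycle G ![x, ↑ah, ↑bh, y] := by
          intro x y hx hy hP4
          obtain ⟨hxp, hpq', hqy, hxq, hxy, hpy, hnxp, hnxq, hnxy, hnpq, hnpy, hnqy⟩ :=
            p4_facts hP4
          have hP4' : IsInducedPathOn (G.induce (Aset G W)) 4 ![⟨x, hx⟩, ah, bh, ⟨y, hy⟩] :=
            p4_mk hxp hpq' hqy hxq hxy hpy (fun h => hnxy (congrArg Subtype.val h))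
          have hcyc' := induce_cycle (hav.2 ⟨x, hx⟩ ⟨y, hy⟩ hP4')
          have heq : (fun i => ((![⟨x, hx⟩, ah, bh, ⟨y, hy⟩] :
              Fin 4 → (↥(Aset G W))) i : V')) = ![x, ↑ah, ↑bh, y] := by
            funext i; fin_cases i <;> rfl
          rwa [heq] at hcyc'
        exact iter hconn hcov (((Dset G W ↑ah ↑bh)ᶜ : Set V').ncard) ↑ah ↑bh ah.2 bh.2 hav.1
          (Or.inl hHav) le_rfl

end AvoidAux

/-- Every finite graph with at least one edge has an avoidable edge. -/
theorem stmt1 [Fintype V] (G : SimpleGraph V) (h : ∃ u v : V, G.Adj u v) :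
    ∃ u v : V, AvoidableEdge G u v := by
  obtain ⟨u, v, huv⟩ := h
  obtain ⟨a, b, hav⟩ :=
    (AvoidAux.master ((Fintype.card V + 1) * (Fintype.card V + 1)) V G).1 u v huv le_rfl
  exact ⟨a, b, hav⟩
end

section
/- For every positive integer k and every finite graph G and every vertex u ∈ V(G), either G − N[u] contains no induced path on k vertices, or there exists an induced path Q on k vertices with all vertices in G − N[u] that is avoidable in G. -/
variable {V : Type*}

namespace AvdPf

open Classical

/-- an isolated vertex -/
def Isol (G : SimpleGraph V) (z : V) : Prop := ∀ w, ¬ G.Adj z w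

def GoodP (G : SimpleGraph V) (k : ℕ) (u : V) (F : Set V) (p : Fin k → V) : Prop :=
  IsInducedPathOn G k p ∧ (∀ i, OutsideClosedNbhd G u (p i)) ∧ ∀ i, p i ∉ F

lemma succ_mod_eq_iff {n a b : ℕ} (ha : a < n) (_hb : b < n) :
    ((a + 1) % n = b) ↔ (a + 1 = b ∨ (a + 1 = n ∧ b = 0)) := by
  rcases eq_or_ne (a+1) n with h | h
  · rw [h, Nat.mod_self]; omega
  · rw [Nat.mod_eq_of_lt (by omega)]; omega

lemma fin_mk_val {n a : ℕ} (h : a < n) : (⟨a, h⟩ : Fin n).val = a := rfl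

lemma path_window {G : SimpleGraph V} {m k a : ℕ} {q : Fin m → V}
    (hq : IsInducedPathOn G m q) (h : a + k ≤ m) :
    IsInducedPathOn G k (fun i => q ⟨a + i.val, by omega⟩) := by
  obtain ⟨hinj, hadj⟩ := hq
  constructor
  · intro i j hij
    have h2 := hinj hij
    have h3 : a + i.val = a + j.val := congrArg Fin.val h2
    exact Fin.ext (by omega)
  · intro i j
    rw [hadj]
    dsimp only
    constructor <;> (intro hh; omega)

lemma path_transfer {G G' : SimpleGraph V} {k : ℕ} {p : Fin k → V}
    (h : ∀ i j : Fin k, G.Adj (p i) (p j) ↔ G'.Adj (p i) (p j))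
    (hp : IsInducedPathOn G k p) : IsInducedPathOn G' k p :=
  ⟨hp.1, fun i j => ((h i j).symm).trans (hp.2 i j)⟩

lemma cycle_exists_adj {G : SimpleGraph V} {n : ℕ} {c : Fin n → V}
    (hc : IsInducedCycleOn G n c) (t : Fin n) : ∃ s, G.Adj (c t) (c s) := by
  have hn : 0 < n := by have := hc.1; omega
  refine ⟨⟨(t.val + 1) % n, Nat.mod_lt _ hn⟩, ?_⟩
  rw [hc.2.2]; left; rfl

lemma val_cond_iff {m : ℕ} (a b : Fin (m+3)) :
    (a.val + 1) % (m+3) = b.val ↔ a + 1 = b := by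
  rw [Fin.ext_iff, Fin.val_add, Fin.val_one]

lemma cycle_rotate {G : SimpleGraph V} {n : ℕ} {c : Fin n → V}
    (hc : IsInducedCycleOn G n c) (t : Fin n) :
    IsInducedCycleOn G n (fun i => c (i + t)) := by
  have hn3 := hc.1
  obtain ⟨m, rfl⟩ : ∃ m, n = m + 3 := ⟨n - 3, by omega⟩
  obtain ⟨h3, hinj, hadj⟩ := hc
  refine ⟨h3, fun i j hij => ?_, fun i j => ?_⟩
  · exact add_right_cancel (hinj hij)
  · rw [hadj, val_cond_iff, val_cond_iff, val_cond_iff, val_cond_iff]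
    have key : ∀ x y : Fin (m+3), ((x + t) + 1 = y + t) ↔ (x + 1 = y) := by
      intro x y
      rw [add_right_comm]
      exact add_left_inj t
    rw [key, key]

lemma cycle_reverse {G : SimpleGraph V} {n : ℕ} {c : Fin n → V}
    (hc : IsInducedCycleOn G n c) :
    IsInducedCycleOn G n (fun i => c (-i)) := by
  have hn3 := hc.1
  obtain ⟨m, rfl⟩ : ∃ m, n = m + 3 := ⟨n - 3, by omega⟩
  obtain ⟨h3, hinj, hadj⟩ := hc
  refine ⟨h3, fun i j hij => ?_, fun i j => ?_⟩
  · exact neg_injective (hinj hij)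
  · rw [hadj, val_cond_iff, val_cond_iff, val_cond_iff, val_cond_iff]
    have key : ∀ x y : Fin (m+3), (-x + 1 = -y) ↔ (y + 1 = x) := by
      intro x y
      constructor
      · intro h
        have h3' := congrArg Neg.neg h
        simp only [neg_neg] at h3'
        have h2 : y = x - 1 := by rw [← h3']; abel
        rw [h2]; abel
      · intro h
        have h2 : y = x - 1 := by rw [← h]; abel
        rw [h2]
        abel
    rw [key, key]
    exact Or.comm



section Merge

variable {G : SimpleGraph V} {u v : V}

lemma merge_ne_v {a b : V} (h : (mergeGraph G u v).Adj a b) : a ≠ v ∧ b ≠ v :=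
  ⟨h.2.1, h.2.2.1⟩

lemma merge_adj_iff {a b : V} (hav : a ≠ v) (hbv : b ≠ v) (hau : a ≠ u) (hbu : b ≠ u) :
    (mergeGraph G u v).Adj a b ↔ G.Adj a b := by
  constructor
  · rintro ⟨h1, h2, h3, h | ⟨rfl, h⟩ | ⟨rfl, h⟩⟩
    · exact h
    · exact absurd rfl hau
    · exact absurd rfl hbu
  · intro h
    exact ⟨h.ne, hav, hbv, Or.inl h⟩

lemma merge_adj_u_iff (huv : G.Adj u v) {b : V} (hbu : b ≠ u) (hbv : b ≠ v) :
    (mergeGraph G u v).Adj u b ↔ (G.Adj u b ∨ G.Adj v b) := by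
  constructor
  · rintro ⟨h1, h2, h3, h | ⟨h4, h⟩ | ⟨h4, h⟩⟩
    · exact Or.inl h
    · exact Or.inr h
    · exact absurd h4 hbu
  · rintro (h | h)
    · exact ⟨h.ne, huv.ne, hbv, Or.inl h⟩
    · exact ⟨Ne.symm hbu, huv.ne, hbv, Or.inr (Or.inl ⟨rfl, h⟩)⟩

lemma merge_edges_lt [Fintype V] (huv : G.Adj u v) :
    (mergeGraph G u v).edgeSet.ncard < G.edgeSet.ncard := by
  classical
  set σ : V → V := fun a => if a = u then v else a with hσ
  set τ : V → V := fun a => if a = v then u else a with hτ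
  set f : Sym2 V → Sym2 V := fun e => if e ∈ G.edgeSet then e else e.map σ with hf
  have hfpos : ∀ e, e ∈ G.edgeSet → f e = e := by
    intro e he; rw [hf]; simp only [if_pos he]
  have hfneg : ∀ e, e ∉ G.edgeSet → f e = e.map σ := by
    intro e he; rw [hf]; simp only [if_neg he]
  have hσu : σ u = v := by rw [hσ]; simp
  have hσv : ∀ a, a ≠ u → σ a = a := by intro a ha; rw [hσ]; simp [ha]
  have hτv : τ v = u := by rw [hτ]; simp
  have hτa : ∀ a, a ≠ v → τ a = a := by intro a ha; rw [hτ]; simp [ha]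
  have hmaps : ∀ e ∈ (mergeGraph G u v).edgeSet, f e ∈ G.edgeSet \ {s(u, v)} := by
    intro e he
    induction e with
    | _ a b =>
      rw [SimpleGraph.mem_edgeSet] at he
      by_cases hG : G.Adj a b
      · rw [hfpos _ ((SimpleGraph.mem_edgeSet G).2 hG)]
        refine ⟨(SimpleGraph.mem_edgeSet G).2 hG, ?_⟩
        simp only [Set.mem_singleton_iff, Sym2.eq_iff]
        rintro (⟨h4, h5⟩ | ⟨h4, h5⟩)
        · exact he.2.2.1 h5
        · exact he.2.1 h4
      · rw [hfneg _ (fun hh => hG ((SimpleGraph.mem_edgeSet G).1 hh))]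
        rcases he with ⟨h1, h2, h3, h | ⟨hau, h⟩ | ⟨hbu, h⟩⟩
        · exact absurd h hG
        · have hbne : b ≠ u := fun hh => h1 (hau.trans hh.symm)
          have heq : Sym2.map σ s(a, b) = s(v, b) := by
            rw [Sym2.map_pair_eq, hau, hσu, hσv b hbne]
          rw [heq]
          refine ⟨(SimpleGraph.mem_edgeSet G).2 h, ?_⟩
          simp only [Set.mem_singleton_iff, Sym2.eq_iff]
          rintro (⟨hvu, hbv⟩ | ⟨hvv, hbu⟩)
          · exact huv.ne' hvu
          · exact hbne hbu
        · have hane : a ≠ u := fun hh => h1 (hh.trans hbu.symm)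
          have heq : Sym2.map σ s(a, b) = s(a, v) := by
            rw [Sym2.map_pair_eq, hbu, hσu, hσv a hane]
          rw [heq]
          refine ⟨(SimpleGraph.mem_edgeSet G).2 h, ?_⟩
          simp only [Set.mem_singleton_iff, Sym2.eq_iff]
          rintro (⟨hau2, hvv⟩ | ⟨hav, hvu⟩)
          · exact hane hau2
          · exact huv.ne' hvu
  have hrec : ∀ e ∈ (mergeGraph G u v).edgeSet, Sym2.map τ (f e) = e := by
    intro e he
    induction e with
    | _ a b =>
      rw [SimpleGraph.mem_edgeSet] at he
      have hanv : a ≠ v := he.2.1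
      have hbnv : b ≠ v := he.2.2.1
      by_cases hG : G.Adj a b
      · rw [hfpos _ ((SimpleGraph.mem_edgeSet G).2 hG), Sym2.map_pair_eq, hτa a hanv, hτa b hbnv]
      · rw [hfneg _ (fun hh => hG ((SimpleGraph.mem_edgeSet G).1 hh))]
        rcases he with ⟨h1, h2, h3, h | ⟨hau, h⟩ | ⟨hbu, h⟩⟩
        · exact absurd h hG
        · have hbne : b ≠ u := fun hh => h1 (hau.trans hh.symm)
          rw [Sym2.map_pair_eq, hau, hσu, hσv b hbne, Sym2.map_pair_eq, hτv, hτa b hbnv]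
        · have hane : a ≠ u := fun hh => h1 (hh.trans hbu.symm)
          rw [Sym2.map_pair_eq, hbu, hσu, hσv a hane, Sym2.map_pair_eq, hτv, hτa a hanv]
  have hinj : Set.InjOn f (mergeGraph G u v).edgeSet := by
    intro e1 he1 e2 he2 hfe
    have := hrec e1 he1
    rw [hfe, hrec e2 he2] at this
    exact this.symm
  have h1 : (mergeGraph G u v).edgeSet.ncard ≤ (G.edgeSet \ {s(u, v)}).ncard :=
    Set.ncard_le_ncard_of_injOn f hmaps hinj (Set.toFinite _)
  have h2 : (G.edgeSet \ {s(u, v)}).ncard < G.edgeSet.ncard :=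
    Set.ncard_diff_singleton_lt_of_mem ((SimpleGraph.mem_edgeSet G).2 huv) (Set.toFinite _)
  omega


lemma merge_cycle_ne_u {G : SimpleGraph V} {u : V} {m : ℕ} {c : Fin (m+3) → V}
    (hinj : Function.Injective c) (h0 : c 0 = u) :
    ∀ t : Fin (m+3), t ≠ 0 → c t ≠ u := by
  intro t ht h
  exact ht (hinj (h.trans h0.symm))

/-- which positions the merged vertex can see on the cycle -/
lemma merge_cycle_spec {G : SimpleGraph V} {u v : V} (huv : G.Adj u v) {m : ℕ}
    {c : Fin (m+3) → V}
    (hc : IsInducedCycleOn (mergeGraph G u v) (m+3) c)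
    (h0 : c 0 = u) (hvn : ∀ t, c t ≠ v) :
    ∀ j : Fin (m+3), j ≠ 0 → ((G.Adj u (c j) ∨ G.Adj v (c j)) ↔ (j.val = 1 ∨ j.val = m+2)) := by
  intro j hj
  have hne : c j ≠ u := merge_cycle_ne_u (G := G) hc.2.1 h0 j hj
  rw [← merge_adj_u_iff huv hne (hvn j)]
  have h2 := hc.2.2 0 j
  rw [h0] at h2
  rw [h2]
  simp only [Fin.val_zero]
  rw [succ_mod_eq_iff (by omega) j.isLt, succ_mod_eq_iff j.isLt (by omega)]
  have hjne : j.val ≠ 0 := fun h => hj (Fin.ext h)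
  omega

/-- transfer of adjacency between non-merged vertices -/
lemma merge_cycle_transfer {G : SimpleGraph V} {u v : V} {m : ℕ}
    {c : Fin (m+3) → V}
    (hc : IsInducedCycleOn (mergeGraph G u v) (m+3) c)
    (h0 : c 0 = u) (hvn : ∀ t, c t ≠ v) :
    ∀ i j : Fin (m+3), i ≠ 0 → j ≠ 0 →
      (G.Adj (c i) (c j) ↔ (mergeGraph G u v).Adj (c i) (c j)) := by
  intro i j hi hj
  exact (merge_adj_iff (hvn i) (hvn j) (merge_cycle_ne_u (G := G) hc.2.1 h0 i hi)
    (merge_cycle_ne_u (G := G) hc.2.1 h0 j hj)).symm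

/-- Case 1: both cycle-edges at the merged vertex come from `u`. -/
lemma merge_cycle_case1 {G : SimpleGraph V} {u v : V} (huv : G.Adj u v) {m : ℕ}
    {c : Fin (m+3) → V}
    (hc : IsInducedCycleOn (mergeGraph G u v) (m+3) c)
    (h0 : c 0 = u) (hvn : ∀ t, c t ≠ v)
    (hub : G.Adj u (c 1)) (hua : G.Adj u (c ⟨m+2, by omega⟩)) :
    IsInducedCycleOn G (m+3) c := by
  have hspec := merge_cycle_spec huv hc h0 hvn
  have htrans := merge_cycle_transfer (u := u) (v := v) hc h0 hvn
  refine ⟨by omega, hc.2.1, ?_⟩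
  have hukey : ∀ j : Fin (m+3), j ≠ 0 → (G.Adj u (c j) ↔ (j.val = 1 ∨ j.val = m+2)) := by
    intro j hj
    constructor
    · intro h; exact (hspec j hj).1 (Or.inl h)
    · rintro (h | h)
      · have : j = 1 := Fin.ext (by simpa using h)
        rw [this]; exact hub
      · have : j = ⟨m+2, by omega⟩ := Fin.ext (by simpa using h)
        rw [this]; exact hua
  intro i j
  rcases eq_or_ne i 0 with rfl | hi <;> rcases eq_or_ne j 0 with rfl | hj
  · rw [h0]
    simp only [Fin.val_zero]
    rw [succ_mod_eq_iff (by omega) (by omega)]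
    exact iff_of_false (G.irrefl) (by omega)
  · rw [h0, hukey j hj]
    have hjne : j.val ≠ 0 := fun h => hj (Fin.ext h)
    simp only [Fin.val_zero]
    rw [succ_mod_eq_iff (by omega) j.isLt, succ_mod_eq_iff j.isLt (by omega)]
    omega
  · rw [h0, G.adj_comm, hukey i hi]
    have hine : i.val ≠ 0 := fun h => hi (Fin.ext h)
    simp only [Fin.val_zero]
    rw [succ_mod_eq_iff i.isLt (by omega), succ_mod_eq_iff (by omega) i.isLt]
    omega
  · rw [htrans i j hi hj, hc.2.2]


/-- Case 2: both cycle-edges at the merged vertex come from `v`: replace `u` by `v`. -/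
lemma merge_cycle_case2 {G : SimpleGraph V} {u v : V} (huv : G.Adj u v) {m : ℕ}
    {c : Fin (m+3) → V}
    (hc : IsInducedCycleOn (mergeGraph G u v) (m+3) c)
    (h0 : c 0 = u) (hvn : ∀ t, c t ≠ v)
    (hvb : G.Adj v (c 1)) (hva : G.Adj v (c ⟨m+2, by omega⟩)) :
    IsInducedCycleOn G (m+3) (fun i => if i = 0 then v else c i) := by
  have hspec := merge_cycle_spec huv hc h0 hvn
  have htrans := merge_cycle_transfer (u := u) (v := v) hc h0 hvn
  have hvkey : ∀ j : Fin (m+3), j ≠ 0 → (G.Adj v (c j) ↔ (j.val = 1 ∨ j.val = m+2)) := by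
    intro j hj
    constructor
    · intro h; exact (hspec j hj).1 (Or.inr h)
    · rintro (h | h)
      · have : j = 1 := Fin.ext (by simpa using h)
        rw [this]; exact hvb
      · have : j = ⟨m+2, by omega⟩ := Fin.ext (by simpa using h)
        rw [this]; exact hva
  refine ⟨by omega, ?_, ?_⟩
  · intro i j hij
    simp only at hij
    rcases eq_or_ne i 0 with rfl | hi <;> rcases eq_or_ne j 0 with rfl | hj
    · rfl
    · rw [if_pos rfl, if_neg hj] at hij
      exact absurd hij.symm (hvn j)
    · rw [if_neg hi, if_pos rfl] at hij
      exact absurd hij (hvn i)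
    · rw [if_neg hi, if_neg hj] at hij
      exact hc.2.1 hij
  · intro i j
    simp only
    rcases eq_or_ne i 0 with rfl | hi <;> rcases eq_or_ne j 0 with rfl | hj
    · rw [if_pos rfl]
      simp only [Fin.val_zero]
      rw [succ_mod_eq_iff (by omega) (by omega)]
      exact iff_of_false (G.irrefl) (by omega)
    · rw [if_pos rfl, if_neg hj, hvkey j hj]
      have hjne : j.val ≠ 0 := fun h => hj (Fin.ext h)
      simp only [Fin.val_zero]
      rw [succ_mod_eq_iff (by omega) j.isLt, succ_mod_eq_iff j.isLt (by omega)]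
      omega
    · rw [if_pos rfl, if_neg hi, G.adj_comm, hvkey i hi]
      have hine : i.val ≠ 0 := fun h => hi (Fin.ext h)
      simp only [Fin.val_zero]
      rw [succ_mod_eq_iff i.isLt (by omega), succ_mod_eq_iff (by omega) i.isLt]
      omega
    · rw [if_neg hi, if_neg hj, htrans i j hi hj, hc.2.2]

/-- Case 3: one edge from `u`, the other from `v`: insert `v` into the cycle. -/
lemma merge_cycle_case3 {G : SimpleGraph V} {u v : V} (huv : G.Adj u v) {m : ℕ}
    {c : Fin (m+3) → V}
    (hc : IsInducedCycleOn (mergeGraph G u v) (m+3) c)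
    (h0 : c 0 = u) (hvn : ∀ t, c t ≠ v)
    (hub : G.Adj u (c 1)) (hva : G.Adj v (c ⟨m+2, by omega⟩))
    (hnua : ¬ G.Adj u (c ⟨m+2, by omega⟩)) (hnvb : ¬ G.Adj v (c 1)) :
    IsInducedCycleOn G (m+4) (fun x : Fin (m+4) => if h : x.val < m+3 then c ⟨x.val, h⟩ else v) := by
  have hspec := merge_cycle_spec huv hc h0 hvn
  have htrans := merge_cycle_transfer (u := u) (v := v) hc h0 hvn
  have hcu : ∀ t : Fin (m+3), t ≠ 0 → c t ≠ u := merge_cycle_ne_u (G := G) hc.2.1 h0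
  have hukey : ∀ j : Fin (m+3), j ≠ 0 → (G.Adj u (c j) ↔ (j.val = 1)) := by
    intro j hj
    constructor
    · intro h
      rcases (hspec j hj).1 (Or.inl h) with h2 | h2
      · exact h2
      · exfalso
        apply hnua
        have : j = ⟨m+2, by omega⟩ := Fin.ext (by simpa using h2)
        rw [← this]; exact h
    · intro h
      have : j = 1 := Fin.ext (by simpa using h)
      rw [this]; exact hub
  have hvkey : ∀ j : Fin (m+3), (G.Adj v (c j) ↔ (j.val = 0 ∨ j.val = m+2)) := by
    intro j
    rcases eq_or_ne j 0 with rfl | hj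
    · simp only [Fin.val_zero, h0]
      exact iff_of_true huv.symm (by simp)
    · constructor
      · intro h
        rcases (hspec j hj).1 (Or.inr h) with h2 | h2
        · exfalso
          apply hnvb
          have : j = 1 := Fin.ext (by simpa using h2)
          rw [← this]; exact h
        · exact Or.inr h2
      · rintro (h | h)
        · exact absurd (Fin.ext h) hj
        · have : j = ⟨m+2, by omega⟩ := Fin.ext (by simpa using h)
          rw [this]; exact hva
  refine ⟨by omega, ?_, ?_⟩
  · intro x y hxy
    simp only at hxy
    by_cases hx : x.val < m+3 <;> by_cases hy : y.val < m+3
    · rw [dif_pos hx, dif_pos hy] at hxy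
      have := congrArg Fin.val (hc.2.1 hxy)
      simp only at this
      exact Fin.ext (by omega)
    · rw [dif_pos hx, dif_neg hy] at hxy
      exact absurd hxy (hvn _)
    · rw [dif_neg hx, dif_pos hy] at hxy
      exact absurd hxy.symm (hvn _)
    · exact Fin.ext (by omega)
  · intro x y
    simp only
    by_cases hx : x.val < m+3 <;> by_cases hy : y.val < m+3
    · rw [dif_pos hx, dif_pos hy]
      rcases eq_or_ne x.val 0 with hx0 | hx0 <;> rcases eq_or_ne y.val 0 with hy0 | hy0
      · have ex : (⟨x.val, hx⟩ : Fin (m+3)) = 0 := Fin.ext (by simpa using hx0)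
        have ey : (⟨y.val, hy⟩ : Fin (m+3)) = 0 := Fin.ext (by simpa using hy0)
        rw [ex, ey, h0]
        rw [succ_mod_eq_iff (by omega) (by omega), succ_mod_eq_iff (by omega) (by omega)]
        exact iff_of_false (G.irrefl) (by omega)
      · have ex : (⟨x.val, hx⟩ : Fin (m+3)) = 0 := Fin.ext (by simpa using hx0)
        have hyne : (⟨y.val, hy⟩ : Fin (m+3)) ≠ 0 := fun h => hy0 (by simpa using congrArg Fin.val h)
        rw [ex, h0, hukey _ hyne]
        dsimp only
        rw [succ_mod_eq_iff (by omega) (by omega), succ_mod_eq_iff (by omega) (by omega)]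
        omega
      · have ey : (⟨y.val, hy⟩ : Fin (m+3)) = 0 := Fin.ext (by simpa using hy0)
        have hxne : (⟨x.val, hx⟩ : Fin (m+3)) ≠ 0 := fun h => hx0 (by simpa using congrArg Fin.val h)
        rw [ey, h0, G.adj_comm, hukey _ hxne]
        dsimp only
        rw [succ_mod_eq_iff (by omega) (by omega), succ_mod_eq_iff (by omega) (by omega)]
        omega
      · have hxne : (⟨x.val, hx⟩ : Fin (m+3)) ≠ 0 := fun h => hx0 (by simpa using congrArg Fin.val h)
        have hyne : (⟨y.val, hy⟩ : Fin (m+3)) ≠ 0 := fun h => hy0 (by simpa using congrArg Fin.val h)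
        rw [htrans _ _ hxne hyne, hc.2.2]
        dsimp only
        rw [succ_mod_eq_iff (by omega) (by omega), succ_mod_eq_iff (by omega) (by omega),
          succ_mod_eq_iff (by omega) (by omega), succ_mod_eq_iff (by omega) (by omega)]
        omega
    · rw [dif_pos hx, dif_neg hy]
      have hy3 : y.val = m+3 := by omega
      rw [G.adj_comm, hvkey ⟨x.val, hx⟩]
      dsimp only
      rw [succ_mod_eq_iff (by omega) (by omega), succ_mod_eq_iff (by omega) (by omega)]
      omega
    · rw [dif_neg hx, dif_pos hy]
      have hx3 : x.val = m+3 := by omega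
      rw [hvkey ⟨y.val, hy⟩]
      dsimp only
      rw [succ_mod_eq_iff (by omega) (by omega), succ_mod_eq_iff (by omega) (by omega)]
      omega
    · rw [dif_neg hx, dif_neg hy]
      have hx3 : x.val = m+3 := by omega
      have hy3 : y.val = m+3 := by omega
      rw [succ_mod_eq_iff (by omega) (by omega), succ_mod_eq_iff (by omega) (by omega)]
      exact iff_of_false (G.irrefl) (by omega)


lemma merge_cycle_lift {G : SimpleGraph V} {u v : V} (huv : G.Adj u v) {n : ℕ} {c : Fin n → V}
    (hc : IsInducedCycleOn (mergeGraph G u v) n c) :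
    ∃ (n' : ℕ) (c' : Fin n' → V), IsInducedCycleOn G n' c' ∧
      ∀ z, z ∈ Set.range c → z ≠ u → z ∈ Set.range c' := by
  have h3 := hc.1
  obtain ⟨m, rfl⟩ : ∃ m, n = m + 3 := ⟨n - 3, by omega⟩
  have hvn : ∀ t, c t ≠ v := by
    intro t ht
    obtain ⟨s, hadj⟩ := cycle_exists_adj hc t
    exact (merge_ne_v hadj).1 ht
  by_cases hu : ∃ t, c t = u
  · obtain ⟨t, ht⟩ := hu
    have hc₀ : IsInducedCycleOn (mergeGraph G u v) (m+3) (fun i => c (i + t)) :=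
      cycle_rotate hc t
    set c₀ : Fin (m+3) → V := fun i => c (i + t) with hc₀def
    have h00 : c₀ 0 = u := by rw [hc₀def]; dsimp only; rw [zero_add]; exact ht
    have hvn₀ : ∀ s, c₀ s ≠ v := fun s => hvn _
    have hrange₀ : ∀ z, z ∈ Set.range c → z ∈ Set.range c₀ := by
      rintro z ⟨s, rfl⟩
      exact ⟨s - t, by rw [hc₀def]; dsimp only; rw [sub_add_cancel]⟩
    have hadj1 : (mergeGraph G u v).Adj u (c₀ 1) := by
      have h2 := hc₀.2.2 0 1
      rw [h00] at h2
      rw [h2]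
      left
      simp only [Fin.val_zero, Fin.val_one]
      exact Nat.mod_eq_of_lt (by omega)
    have hadjL : (mergeGraph G u v).Adj u (c₀ ⟨m+2, by omega⟩) := by
      have h2 := hc₀.2.2 ⟨m+2, by omega⟩ 0
      rw [h00] at h2
      refine ((mergeGraph G u v).adj_comm _ _).1 (h2.2 ?_)
      left
      simp only [Fin.val_zero]
      exact Nat.mod_self (m+3)
    have hb := (merge_adj_u_iff huv hadj1.ne' (hvn₀ 1)).1 hadj1
    have ha := (merge_adj_u_iff huv hadjL.ne' (hvn₀ _)).1 hadjL
    by_cases c1 : G.Adj u (c₀ 1) ∧ G.Adj u (c₀ ⟨m+2, by omega⟩)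
    · exact ⟨m+3, c₀, merge_cycle_case1 huv hc₀ h00 hvn₀ c1.1 c1.2,
        fun z hz _ => hrange₀ z hz⟩
    · by_cases c2 : G.Adj v (c₀ 1) ∧ G.Adj v (c₀ ⟨m+2, by omega⟩)
      · refine ⟨m+3, _, merge_cycle_case2 huv hc₀ h00 hvn₀ c2.1 c2.2, ?_⟩
        rintro z hz hzu
        obtain ⟨s, rfl⟩ := hrange₀ z hz
        have hs0 : s ≠ 0 := fun e => hzu (by rw [e]; exact h00)
        exact ⟨s, by show (if s = 0 then v else c₀ s) = c₀ s; rw [if_neg hs0]⟩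
      · have hmix : (G.Adj u (c₀ 1) ∧ G.Adj v (c₀ ⟨m+2, by omega⟩) ∧
            ¬G.Adj u (c₀ ⟨m+2, by omega⟩) ∧ ¬G.Adj v (c₀ 1)) ∨
            (G.Adj u (c₀ ⟨m+2, by omega⟩) ∧ G.Adj v (c₀ 1) ∧
            ¬G.Adj u (c₀ 1) ∧ ¬G.Adj v (c₀ ⟨m+2, by omega⟩)) := by tauto
        rcases hmix with ⟨k1, k2, k3, k4⟩ | ⟨k1, k2, k3, k4⟩
        · refine ⟨m+4, _, merge_cycle_case3 huv hc₀ h00 hvn₀ k1 k2 k3 k4, ?_⟩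
          rintro z hz _
          obtain ⟨s, rfl⟩ := hrange₀ z hz
          refine ⟨⟨s.val, by omega⟩, ?_⟩
          dsimp only
          rw [dif_pos s.isLt]
        · have hc₁ : IsInducedCycleOn (mergeGraph G u v) (m+3) (fun i => c₀ (-i)) :=
            cycle_reverse hc₀
          have hm2 : (-1 : Fin (m+3)) = ⟨m+2, by omega⟩ := Fin.ext (by rw [Fin.coe_neg_one])
          have e0 : c₀ (-(0 : Fin (m+3))) = u := by rw [neg_zero]; exact h00
          have e1 : c₀ (-(1 : Fin (m+3))) = c₀ ⟨m+2, by omega⟩ := congrArg c₀ hm2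
          have eL : c₀ (-(⟨m+2, by omega⟩ : Fin (m+3))) = c₀ 1 :=
            congrArg c₀ (by rw [← hm2, neg_neg])
          refine ⟨m+4, _, merge_cycle_case3 huv hc₁ e0 (fun s => hvn₀ _)
            (by rw [e1]; exact k1) (by rw [eL]; exact k2)
            (by rw [eL]; exact k3) (by rw [e1]; exact k4), ?_⟩
          rintro z hz _
          obtain ⟨s, rfl⟩ := hrange₀ z hz
          refine ⟨⟨(-s).val, by omega⟩, ?_⟩
          dsimp only
          rw [dif_pos (-s).isLt]
          exact congrArg c₀ (by rw [show ((⟨(-s).val, (-s).isLt⟩ : Fin (m+3))) = -s from Fin.ext rfl, neg_neg])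
  · push_neg at hu
    refine ⟨m+3, c, ⟨by omega, hc.2.1, ?_⟩, fun z hz _ => hz⟩
    intro i j
    rw [← hc.2.2 i j]
    exact (merge_adj_iff (hvn i) (hvn j) (hu i) (hu j)).symm

end Merge

section Helpers

lemma path_init {G : SimpleGraph V} {k : ℕ} {q : Fin (k+2) → V}
    (hq : IsInducedPathOn G (k+2) q) :
    IsInducedPathOn G k (fun i => q ⟨i.val, by omega⟩) := by
  constructor
  · intro i j hij
    have h3 := congrArg (@Fin.val (k+2)) (hq.1 hij)
    simp only [fin_mk_val] at h3
    exact Fin.ext h3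
  · intro i j
    rw [hq.2]

lemma path_tail {G : SimpleGraph V} {k : ℕ} {q : Fin (k+2) → V}
    (hq : IsInducedPathOn G (k+2) q) :
    IsInducedPathOn G k (fun i => q ⟨i.val + 2, by omega⟩) := by
  constructor
  · intro i j hij
    have h3 := congrArg (@Fin.val (k+2)) (hq.1 hij)
    simp only [fin_mk_val] at h3
    exact Fin.ext (by omega)
  · intro i j
    rw [hq.2]
    constructor <;> intro h <;> simp only [fin_mk_val] at h ⊢ <;> omega

lemma reach_cases {H : SimpleGraph V} {a b : V} (h : H.Reachable a b) :
    a = b ∨ ∃ w, H.Adj b w := by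
  obtain ⟨w⟩ := h
  exact match w.reverse with
  | SimpleGraph.Walk.nil => Or.inl rfl
  | SimpleGraph.Walk.cons h' _ => Or.inr ⟨_, h'⟩

/-- the graph outside the closed neighbourhood of `u` -/
def outerGraph (G : SimpleGraph V) (u : V) : SimpleGraph V where
  Adj a b := G.Adj a b ∧ OutsideClosedNbhd G u a ∧ OutsideClosedNbhd G u b
  symm := by constructor; rintro a b ⟨h1, h2, h3⟩; exact ⟨h1.symm, h3, h2⟩
  loopless := ⟨fun a h => G.irrefl h.1⟩

/-- the restriction of `G` to a set -/
def restrGraph (G : SimpleGraph V) (C : Set V) : SimpleGraph V where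
  Adj a b := G.Adj a b ∧ a ∈ C ∧ b ∈ C
  symm := by constructor; rintro a b ⟨h1, h2, h3⟩; exact ⟨h1.symm, h3, h2⟩
  loopless := ⟨fun a h => G.irrefl h.1⟩

lemma restr_adj_iff {G : SimpleGraph V} {C : Set V} {a b : V} (ha : a ∈ C) (hb : b ∈ C) :
    (restrGraph G C).Adj a b ↔ G.Adj a b :=
  ⟨fun h => h.1, fun h => ⟨h, ha, hb⟩⟩

open Classical in
noncomputable def piv (G : SimpleGraph V) (u : V) : ℕ := if Isol G u then 1 else 0

lemma piv_eq_one {G : SimpleGraph V} {u : V} (h : Isol G u) : piv G u = 1 := by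
  unfold piv; rw [if_pos h]

lemma piv_eq_zero {G : SimpleGraph V} {u : V} (h : ¬ Isol G u) : piv G u = 0 := by
  unfold piv; rw [if_neg h]

lemma piv_le_one (G : SimpleGraph V) (u : V) : piv G u ≤ 1 := by
  unfold piv; split <;> omega

/-- extending an induced path by `u` adjacent to both endpoints gives an induced cycle -/
lemma ext_cycle_u {G : SimpleGraph V} {u : V} {k : ℕ} (hk : 1 ≤ k) {q : Fin (k+2) → V}
    (hq : IsInducedPathOn G (k+2) q)
    (hux : G.Adj u (q ⟨0, by omega⟩))
    (huy : G.Adj u (q ⟨k+1, by omega⟩))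
    (hmid : ∀ s : Fin (k+2), 0 < s.val → s.val < k+1 → ¬ G.Adj u (q s))
    (hnotin : ∀ s, q s ≠ u) :
    InInducedCycle G q := by
  refine ⟨k+3, fun x : Fin (k+3) => if h : x.val < k+2 then q ⟨x.val, h⟩ else u,
    ⟨by omega, ?_, ?_⟩, ?_⟩
  · intro x y hxy
    dsimp only at hxy
    by_cases hx : x.val < k+2 <;> by_cases hy : y.val < k+2
    · rw [dif_pos hx, dif_pos hy] at hxy
      have h5 := congrArg (@Fin.val (k+2)) (hq.1 hxy)
      simp only [fin_mk_val] at h5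
      exact Fin.ext (by omega)
    · rw [dif_pos hx, dif_neg hy] at hxy
      exact absurd hxy (hnotin _)
    · rw [dif_neg hx, dif_pos hy] at hxy
      exact absurd hxy.symm (hnotin _)
    · exact Fin.ext (by omega)
  · intro x y
    dsimp only
    have hqu : ∀ hx : x.val < k+2, G.Adj u (q ⟨x.val, hx⟩) ↔ (x.val = 0 ∨ x.val = k+1) := by
      intro hx
      constructor
      · intro h
        by_contra hcon
        push_neg at hcon
        have h1 : 0 < x.val := by omega
        have h2 : x.val < k+1 := by omega
        exact hmid ⟨x.val, hx⟩ h1 h2 h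
      · rintro (h | h)
        · rw [show (⟨x.val, hx⟩ : Fin (k+2)) = ⟨0, by omega⟩ from Fin.ext h]; exact hux
        · rw [show (⟨x.val, hx⟩ : Fin (k+2)) = ⟨k+1, by omega⟩ from Fin.ext h]; exact huy
    have hqu' : ∀ hy : y.val < k+2, G.Adj u (q ⟨y.val, hy⟩) ↔ (y.val = 0 ∨ y.val = k+1) := by
      intro hy
      constructor
      · intro h
        by_contra hcon
        push_neg at hcon
        have h1 : 0 < y.val := by omega
        have h2 : y.val < k+1 := by omega
        exact hmid ⟨y.val, hy⟩ h1 h2 h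
      · rintro (h | h)
        · rw [show (⟨y.val, hy⟩ : Fin (k+2)) = ⟨0, by omega⟩ from Fin.ext h]; exact hux
        · rw [show (⟨y.val, hy⟩ : Fin (k+2)) = ⟨k+1, by omega⟩ from Fin.ext h]; exact huy
    by_cases hx : x.val < k+2 <;> by_cases hy : y.val < k+2
    · rw [dif_pos hx, dif_pos hy, hq.2]
      simp only [fin_mk_val]
      rw [succ_mod_eq_iff (by omega) (by omega), succ_mod_eq_iff (by omega) (by omega)]
      omega
    · rw [dif_pos hx, dif_neg hy, G.adj_comm, hqu hx]
      rw [succ_mod_eq_iff (by omega) (by omega), succ_mod_eq_iff (by omega) (by omega)]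
      omega
    · rw [dif_neg hx, dif_pos hy, hqu' hy]
      rw [succ_mod_eq_iff (by omega) (by omega), succ_mod_eq_iff (by omega) (by omega)]
      omega
    · rw [dif_neg hx, dif_neg hy]
      rw [succ_mod_eq_iff (by omega) (by omega), succ_mod_eq_iff (by omega) (by omega)]
      exact iff_of_false (G.irrefl) (by omega)
  · rintro z ⟨s, rfl⟩
    exact ⟨⟨s.val, by omega⟩, by dsimp only; rw [dif_pos s.isLt]⟩

end Helpers

section Main

lemma not_isol_adj {G : SimpleGraph V} {u : V} (h : ¬ Isol G u) : ∃ w, G.Adj u w := by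
  by_contra hc
  push_neg at hc
  exact h hc

lemma edge_pos [Fintype V] {G : SimpleGraph V} {u w : V} (h : G.Adj u w) :
    1 ≤ G.edgeSet.ncard := by
  have hmem : s(u, w) ∈ G.edgeSet := (SimpleGraph.mem_edgeSet G).2 h
  have hne : G.edgeSet.Nonempty := ⟨_, hmem⟩
  have := (Set.ncard_pos (Set.toFinite _)).2 hne
  omega

theorem main_lemma [Fintype V] (k : ℕ) (hk : 1 ≤ k) :
    ∀ (N : ℕ) (G : SimpleGraph V) (u : V) (F : Set V),
      (∀ f ∈ F, Isol G f) →
      2 * G.edgeSet.ncard + piv G u ≤ N →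
      (¬ ∃ p : Fin k → V, GoodP G k u F p) ∨
        (∃ p : Fin k → V, GoodP G k u F p ∧
          ∀ q : Fin (k+2) → V, IsExtension G p q → InInducedCycle G q) := by
  intro N
  induction N with
  | zero =>
    intro G u F _ hM
    exfalso
    by_cases h : Isol G u
    · rw [piv_eq_one h] at hM; omega
    · obtain ⟨w, hw⟩ := not_isol_adj h
      have := edge_pos hw
      omega
  | succ N IH =>
    intro G u F hF hM
    by_cases hex : ∃ p, GoodP G k u F p
    swap
    · exact Or.inl hex
    obtain ⟨P, hP⟩ := hex
    obtain ⟨hPpath, hPout, hPF⟩ := hP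
    by_cases hiso : Isol G u
    · -- CASE I : isolated pivot, switch pivot
      rw [piv_eq_one hiso] at hM
      by_cases hsw : ∃ w, (¬ Isol G w) ∧ ∃ p, GoodP G k w (F ∪ {u}) p ∧
          ∀ q, IsExtension G p q → InInducedCycle G q
      · obtain ⟨w, _, Q, ⟨hQ1, _, hQ3⟩, hQav⟩ := hsw
        right
        refine ⟨Q, ⟨hQ1, fun i => ⟨fun e => hQ3 i (by rw [e]; exact Set.mem_union_right _ rfl),
          fun ha => hiso _ ha⟩, fun i hf => hQ3 i (Set.mem_union_left _ hf)⟩, hQav⟩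
      · right
        refine ⟨P, ⟨hPpath, hPout, hPF⟩, fun q hq => ?_⟩
        exfalso
        have hqinj := hq.1.1
        have hqadj := hq.1.2
        have hmid : ∀ i : Fin k, q ⟨i.val + 1, by omega⟩ = P i := fun i => hq.2 i
        have hyadj : G.Adj (q ⟨k+1, by omega⟩) (q ⟨k, by omega⟩) := by
          rw [hqadj]
          right
          simp only [fin_mk_val]
        have hyn : ¬ Isol G (q ⟨k+1, by omega⟩) := fun h => h _ hyadj
        have hFiso : ∀ f ∈ F ∪ {u}, Isol G f := by
          rintro f (hf | hf)
          · exact hF f hf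
          · rw [Set.mem_singleton_iff] at hf
            rw [hf]
            exact hiso
        have hmeas : 2 * G.edgeSet.ncard + piv G (q ⟨k+1, by omega⟩) ≤ N := by
          rw [piv_eq_zero hyn]
          omega
        rcases IH G (q ⟨k+1, by omega⟩) (F ∪ {u}) hFiso hmeas with hl | hr
        · apply hl
          refine ⟨fun i => q ⟨i.val, by omega⟩, path_init hq.1, fun i => ⟨?_, ?_⟩, fun i => ?_⟩
          · dsimp only
            intro e
            have h2 := congrArg (@Fin.val (k+2)) (hqinj e)
            simp only [fin_mk_val] at h2
            omega
          · dsimp only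
            intro h
            rw [hqadj] at h
            simp only [fin_mk_val] at h
            omega
          · dsimp only
            rcases Nat.eq_zero_or_pos i.val with h0 | h0
            · -- the new endpoint x : not isolated, hence not in F; not equal to u
              have hxadj : G.Adj (q ⟨i.val, by omega⟩) (q ⟨1, by omega⟩) := by
                rw [hqadj]
                left
                simp only [fin_mk_val]
                omega
              rintro (hf | hf)
              · exact hF _ hf _ hxadj
              · rw [Set.mem_singleton_iff] at hf
                exact hiso _ (hf ▸ hxadj)
            · -- a vertex of P
              have he : q ⟨i.val, by omega⟩ = P ⟨i.val - 1, by omega⟩ := by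
                rw [← hmid ⟨i.val - 1, by omega⟩]
                exact congrArg q (Fin.ext (by simp only [fin_mk_val]; omega))
              rw [he]
              rintro (hf | hf)
              · exact hPF _ hf
              · rw [Set.mem_singleton_iff] at hf
                exact (hPout _).1 hf
        · exact hsw ⟨_, hyn, hr⟩
    · -- CASE II : pivot has a neighbour
      rw [piv_eq_zero hiso] at hM
      by_cases hmv : ∃ v, G.Adj u v ∧ ∃ p, GoodP (mergeGraph G u v) k u (F ∪ {v}) p ∧
          ∀ q, IsExtension (mergeGraph G u v) p q → InInducedCycle (mergeGraph G u v) q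
      · -- LIFT from the merged graph
        obtain ⟨v, huv, Q, ⟨hQ1, hQ2, hQ3⟩, hQav⟩ := hmv
        have hQnu : ∀ i, Q i ≠ u := fun i => (hQ2 i).1
        have hQnv : ∀ i, Q i ≠ v := fun i hf =>
          hQ3 i (by rw [hf]; exact Set.mem_union_right _ rfl)
        have hQnadju : ∀ i, ¬ G.Adj u (Q i) := by
          intro i h
          exact (hQ2 i).2 ((merge_adj_u_iff huv (hQnu i) (hQnv i)).2 (Or.inl h))
        have hQnadjv : ∀ i, ¬ G.Adj v (Q i) := by
          intro i h
          exact (hQ2 i).2 ((merge_adj_u_iff huv (hQnu i) (hQnv i)).2 (Or.inr h))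
        have hQG : IsInducedPathOn G k Q :=
          path_transfer (fun i j => merge_adj_iff (hQnv i) (hQnv j) (hQnu i) (hQnu j)) hQ1
        right
        refine ⟨Q, ⟨hQG, fun i => ⟨hQnu i, hQnadju i⟩, fun i hf => hQ3 i (Set.mem_union_left _ hf)⟩, ?_⟩
        intro q hq
        have hqinj := hq.1.1
        have hqadj := hq.1.2
        have hmid : ∀ i : Fin k, q ⟨i.val + 1, by omega⟩ = Q i := fun i => hq.2 i
        have hqQ : ∀ s : Fin (k+2), 0 < s.val → s.val < k+1 → ∃ i : Fin k, q s = Q i := by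
          intro s h1 h2
          refine ⟨⟨s.val - 1, by omega⟩, ?_⟩
          rw [← hmid ⟨s.val - 1, by omega⟩]
          exact congrArg q (Fin.ext (by simp only [fin_mk_val]; omega))
        have hqnuv : ∀ s : Fin (k+2), q s ≠ u ∧ q s ≠ v := by
          intro s
          rcases Nat.eq_zero_or_pos s.val with h0 | h0
          · have hs : s = ⟨0, by omega⟩ := Fin.ext (by simp only [fin_mk_val]; omega)
            have hadj : G.Adj (q s) (q ⟨1, by omega⟩) := by
              rw [hs, hqadj]
              left
              simp only [fin_mk_val]
            obtain ⟨i, hi⟩ := hqQ ⟨1, by omega⟩ (by simp only [fin_mk_val]; omega)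
              (by simp only [fin_mk_val]; omega)
            rw [hi] at hadj
            exact ⟨fun e => hQnadju i (e ▸ hadj), fun e => hQnadjv i (e ▸ hadj)⟩
          · rcases Nat.lt_or_ge s.val (k+1) with h1 | h1
            · obtain ⟨i, hi⟩ := hqQ s h0 h1
              rw [hi]
              exact ⟨hQnu _, hQnv _⟩
            · have hs : s = ⟨k+1, by omega⟩ := Fin.ext (by simp only [fin_mk_val]; omega)
              have hadj : G.Adj (q s) (q ⟨k, by omega⟩) := by
                rw [hs, hqadj]
                right
                simp only [fin_mk_val]
              obtain ⟨i, hi⟩ := hqQ ⟨k, by omega⟩ (by simp only [fin_mk_val]; omega)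
                (by simp only [fin_mk_val]; omega)
              rw [hi] at hadj
              exact ⟨fun e => hQnadju i (e ▸ hadj), fun e => hQnadjv i (e ▸ hadj)⟩
        have hqm : IsExtension (mergeGraph G u v) Q q :=
          ⟨path_transfer (fun i j =>
            (merge_adj_iff (hqnuv i).2 (hqnuv j).2 (hqnuv i).1 (hqnuv j).1).symm) hq.1, hq.2⟩
        obtain ⟨n, cc, hcyc, hrange⟩ := hQav q hqm
        obtain ⟨n', c', hcyc', hr'⟩ := merge_cycle_lift huv hcyc
        refine ⟨n', c', hcyc', ?_⟩
        rintro z ⟨s, rfl⟩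
        exact hr' _ (hrange ⟨s, rfl⟩) (hqnuv s).1
      · -- all merges returned "no path": derive the dagger property
        have dagger : ∀ v, G.Adj u v → ∀ p : Fin k → V, IsInducedPathOn G k p →
            (∀ i, OutsideClosedNbhd G u (p i)) → (∀ i, p i ∉ F) →
            (∀ i, ¬ G.Adj v (p i)) → (∀ i, p i ≠ v) → False := by
          intro v huv p h1 h2 h3 h4 h5
          have hFm : ∀ f ∈ F ∪ {v}, Isol (mergeGraph G u v) f := by
            rintro f (hf | hf) w hw
            · have hIso := hF f hf
              rcases hw with ⟨hh1, hh2, hh3, hh | ⟨hfu, hh⟩ | ⟨hwu, hh⟩⟩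
              · exact hIso w hh
              · exact hiso (hfu ▸ hIso)
              · exact hIso v hh
            · rw [Set.mem_singleton_iff] at hf
              exact hw.2.1 hf
          have hmeas : 2 * (mergeGraph G u v).edgeSet.ncard + piv (mergeGraph G u v) u ≤ N := by
            have hlt := merge_edges_lt huv
            have hle := piv_le_one (mergeGraph G u v) u
            omega
          rcases IH (mergeGraph G u v) u (F ∪ {v}) hFm hmeas with hl | hr
          · apply hl
            refine ⟨p, path_transfer (fun i j =>
              (merge_adj_iff (h5 i) (h5 j) (h2 i).1 (h2 j).1).symm) h1, fun i => ⟨(h2 i).1, ?_⟩,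
              fun i => ?_⟩
            · intro hadj
              rcases (merge_adj_u_iff huv (h2 i).1 (h5 i)).1 hadj with hh | hh
              · exact (h2 i).2 hh
              · exact h4 i hh
            · rintro (hf | hf)
              · exact h3 i hf
              · rw [Set.mem_singleton_iff] at hf
                exact h5 i hf
          · exact hmv ⟨v, huv, hr⟩
        -- the component C of P in G - N[u]
        set C : Set V := {z | (outerGraph G u).Reachable (P ⟨0, hk⟩) z} with hCdef
        have hCadj : ∀ z w, z ∈ C → (outerGraph G u).Adj z w → w ∈ C :=
          fun z w hz h => hz.trans h.reachable
        have hCout : ∀ z ∈ C, OutsideClosedNbhd G u z := by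
          intro z hz
          have key : ∀ (a b : V), (outerGraph G u).Walk a b →
              OutsideClosedNbhd G u a → OutsideClosedNbhd G u b := by
            intro a b w
            induction w with
            | nil => exact id
            | cons h p ih => intro _; exact ih h.2.2
          obtain ⟨w⟩ := hz
          exact key _ _ w (hPout ⟨0, hk⟩)
        have hCF : ∀ z ∈ C, z ∉ F := by
          intro z hz hzF
          rcases reach_cases hz with he | ⟨w, hw⟩
          · exact hPF ⟨0, hk⟩ (he ▸ hzF)
          · exact hF z hzF _ hw.1
        have hPC : ∀ i : Fin k, P i ∈ C := by
          have key : ∀ m : ℕ, (hm : m < k) → P ⟨m, hm⟩ ∈ C := by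
            intro m
            induction m with
            | zero => intro hm; exact SimpleGraph.Reachable.refl _
            | succ l ih =>
              intro hm
              apply hCadj _ _ (ih (by omega))
              refine ⟨?_, hPout _, hPout _⟩
              rw [hPpath.2]
              left
              simp only [fin_mk_val]
          intro i
          exact key i.val i.isLt
        -- recurse on the restriction of G to C
        have hG2F : ∀ f ∈ {z | z ∉ C}, Isol (restrGraph G C) f := by
          intro f hf w hw
          exact hf hw.2.1
        have hG2lt : (restrGraph G C).edgeSet.ncard < G.edgeSet.ncard := by
          apply Set.ncard_lt_ncard ?_ (Set.toFinite _)
          rw [Set.ssubset_def]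
          constructor
          · intro e
            refine Sym2.ind (fun a b he => ?_) e
            rw [SimpleGraph.mem_edgeSet] at he ⊢
            exact he.1
          · intro hsub
            obtain ⟨w, hw⟩ := not_isol_adj hiso
            have hmem := hsub ((SimpleGraph.mem_edgeSet G).2 hw)
            rw [SimpleGraph.mem_edgeSet] at hmem
            exact (hCout u hmem.2.1).1 rfl
        have hG2meas : 2 * (restrGraph G C).edgeSet.ncard + piv (restrGraph G C) u ≤ N := by
          have := piv_le_one (restrGraph G C) u
          omega
        rcases IH (restrGraph G C) u {z | z ∉ C} hG2F hG2meas with hl | hr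
        · exfalso
          apply hl
          refine ⟨P, path_transfer (fun i j =>
            (restr_adj_iff (hPC i) (hPC j)).symm) hPpath,
            fun i => ⟨(hPout i).1, fun h => (hCout u h.2.1).1 rfl⟩,
            fun i hf => hf (hPC i)⟩
        · obtain ⟨Q, ⟨hQ1, hQ2, hQ3⟩, hQav⟩ := hr
          have hQC : ∀ i, Q i ∈ C := by
            intro i
            by_contra hc
            exact hQ3 i hc
          have hQout : ∀ i, OutsideClosedNbhd G u (Q i) := fun i => hCout _ (hQC i)
          have hQG : IsInducedPathOn G k Q :=
            path_transfer (fun i j => restr_adj_iff (hQC i) (hQC j)) hQ1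
          right
          refine ⟨Q, ⟨hQG, hQout, fun i => hCF _ (hQC i)⟩, ?_⟩
          intro q hq
          have hqinj := hq.1.1
          have hqadj := hq.1.2
          have hmid : ∀ i : Fin k, q ⟨i.val + 1, by omega⟩ = Q i := fun i => hq.2 i
          have hint : ∀ s : Fin (k+2), 0 < s.val → s.val < k+1 → ∃ i : Fin k, q s = Q i := by
            intro s h1 h2
            refine ⟨⟨s.val - 1, by omega⟩, ?_⟩
            rw [← hmid ⟨s.val - 1, by omega⟩]
            exact congrArg q (Fin.ext (by simp only [fin_mk_val]; omega))
          have hintC : ∀ s : Fin (k+2), 0 < s.val → s.val < k+1 → q s ∈ C := by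
            intro s h1 h2
            obtain ⟨i, hi⟩ := hint s h1 h2
            rw [hi]
            exact hQC i
          have hq1C : q ⟨1, by omega⟩ ∈ C := hintC _ (by simp only [fin_mk_val]; omega)
            (by simp only [fin_mk_val]; omega)
          have hqkC : q ⟨k, by omega⟩ ∈ C := hintC _ (by simp only [fin_mk_val]; omega)
            (by simp only [fin_mk_val]; omega)
          have hadj01 : G.Adj (q ⟨0, by omega⟩) (q ⟨1, by omega⟩) := by
            rw [hqadj]; left; simp only [fin_mk_val]
          have hadjlast : G.Adj (q ⟨k+1, by omega⟩) (q ⟨k, by omega⟩) := by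
            rw [hqadj]; right; simp only [fin_mk_val]
          have hxcl : G.Adj u (q ⟨0, by omega⟩) ∨ (q ⟨0, by omega⟩) ∈ C := by
            by_cases h : G.Adj u (q ⟨0, by omega⟩)
            · exact Or.inl h
            · right
              have hne : q ⟨0, by omega⟩ ≠ u := by
                intro e
                exact (hCout _ hq1C).2 (e ▸ hadj01)
              exact hCadj _ _ hq1C ⟨hadj01.symm, hCout _ hq1C, hne, h⟩
          have hycl : G.Adj u (q ⟨k+1, by omega⟩) ∨ (q ⟨k+1, by omega⟩) ∈ C := by
            by_cases h : G.Adj u (q ⟨k+1, by omega⟩)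
            · exact Or.inl h
            · right
              have hne : q ⟨k+1, by omega⟩ ≠ u := by
                intro e
                exact (hCout _ hqkC).2 (e ▸ hadjlast)
              exact hCadj _ _ hqkC ⟨hadjlast.symm, hCout _ hqkC, hne, h⟩
          rcases hxcl with hux | hxC <;> rcases hycl with huy | hyC
          · -- (a) both endpoints adjacent to u : close through u
            apply ext_cycle_u hk hq.1 hux huy
            · intro s h1 h2
              obtain ⟨i, hi⟩ := hint s h1 h2
              rw [hi]
              exact (hQout i).2
            · intro s
              rcases Nat.eq_zero_or_pos s.val with h0 | h0
              · have hs : s = ⟨0, by omega⟩ := Fin.ext (by simp only [fin_mk_val]; omega)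
                rw [hs]
                exact hux.ne'
              · rcases Nat.lt_or_ge s.val (k+1) with h1 | h1
                · obtain ⟨i, hi⟩ := hint s h0 h1
                  rw [hi]
                  exact (hQout i).1
                · have hs : s = ⟨k+1, by omega⟩ := Fin.ext (by simp only [fin_mk_val]; omega)
                  rw [hs]
                  exact huy.ne'
          · -- (b1) x adjacent to u, y in C : contradiction with dagger at x
            exfalso
            have htailC : ∀ i : Fin k, q ⟨i.val + 2, by omega⟩ ∈ C := by
              intro i
              rcases Nat.lt_or_ge (i.val + 2) (k+1) with h1 | h1
              · exact hintC _ (by simp only [fin_mk_val]; omega) (by simp only [fin_mk_val]; omega)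
              · have hs : (⟨i.val + 2, by omega⟩ : Fin (k+2)) = ⟨k+1, by omega⟩ :=
                  Fin.ext (by simp only [fin_mk_val]; omega)
                rw [hs]
                exact hyC
            apply dagger _ hux (fun i : Fin k => q ⟨i.val + 2, by omega⟩) (path_tail hq.1)
              (fun i => hCout _ (htailC i)) (fun i => hCF _ (htailC i))
            · intro i h
              rw [G.adj_comm, hqadj] at h
              simp only [fin_mk_val] at h
              omega
            · intro i e
              have h2 := congrArg (@Fin.val (k+2)) (hqinj e)
              simp only [fin_mk_val] at h2
              omega
          · -- (b2) y adjacent to u, x in C : contradiction with dagger at y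
            exfalso
            have hinitC : ∀ i : Fin k, q ⟨i.val, by omega⟩ ∈ C := by
              intro i
              rcases Nat.eq_zero_or_pos i.val with h0 | h0
              · have hs : (⟨i.val, by omega⟩ : Fin (k+2)) = ⟨0, by omega⟩ :=
                  Fin.ext (by simp only [fin_mk_val]; omega)
                rw [hs]
                exact hxC
              · exact hintC _ (by simp only [fin_mk_val]; omega) (by simp only [fin_mk_val]; omega)
            apply dagger _ huy (fun i : Fin k => q ⟨i.val, by omega⟩) (path_init hq.1)
              (fun i => hCout _ (hinitC i)) (fun i => hCF _ (hinitC i))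
            · intro i h
              rw [G.adj_comm, hqadj] at h
              simp only [fin_mk_val] at h
              omega
            · intro i e
              have h2 := congrArg (@Fin.val (k+2)) (hqinj e)
              simp only [fin_mk_val] at h2
              omega
          · -- (c) both endpoints in C : use the cycle in the restriction
            have hqC : ∀ s : Fin (k+2), q s ∈ C := by
              intro s
              rcases Nat.eq_zero_or_pos s.val with h0 | h0
              · have hs : s = ⟨0, by omega⟩ := Fin.ext (by simp only [fin_mk_val]; omega)
                rw [hs]; exact hxC
              · rcases Nat.lt_or_ge s.val (k+1) with h1 | h1
                · exact hintC s h0 h1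
                · have hs : s = ⟨k+1, by omega⟩ := Fin.ext (by simp only [fin_mk_val]; omega)
                  rw [hs]; exact hyC
            have hqr : IsExtension (restrGraph G C) Q q :=
              ⟨path_transfer (fun i j => (restr_adj_iff (hqC i) (hqC j)).symm) hq.1, hq.2⟩
            obtain ⟨n, cc, hcyc, hrange⟩ := hQav q hqr
            have hccC : ∀ t, cc t ∈ C := by
              intro t
              obtain ⟨s, hadj⟩ := cycle_exists_adj hcyc t
              exact hadj.2.1
            refine ⟨n, cc, ⟨hcyc.1, hcyc.2.1, fun i j => ?_⟩, hrange⟩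
            rw [← hcyc.2.2 i j]
            exact (restr_adj_iff (hccC i) (hccC j)).symm

end Main

end AvdPf

/-- For every positive `k`, finite graph `G` and vertex `u`, either `G − N[u]` has no
induced `P_k`, or some induced `P_k` inside `G − N[u]` is avoidable in `G`. -/
theorem stmt7 [Fintype V] (k : ℕ) (hk : 1 ≤ k) (G : SimpleGraph V) (u : V) :
    (¬ ∃ p : Fin k → V, IsInducedPathOn G k p ∧ ∀ i, OutsideClosedNbhd G u (p i)) ∨
    (∃ p : Fin k → V, IsInducedPathOn G k p ∧ (∀ i, OutsideClosedNbhd G u (p i)) ∧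
      IsAvoidable G p) := by
  rcases AvdPf.main_lemma k hk (2 * G.edgeSet.ncard + AvdPf.piv G u) G u ∅
      (by simp [AvdPf.Isol]) le_rfl with hl | hr
  · left
    rintro ⟨p, h1, h2⟩
    exact hl ⟨p, h1, h2, fun i => Set.notMem_empty _⟩
  · right
    obtain ⟨p, ⟨h1, h2, _⟩, hav⟩ := hr
    exact ⟨p, h1, h2, h1, hav⟩
end

section
/- For every positive integer k, every finite graph G, and every subset X ⊆ V(G) such that G[X] is connected, either G − N[X] contains no induced path on k vertices, or there exists an induced path on k vertices with all vertices in G − N[X] that is avoidable in G. -/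
variable {V : Type*}

/-! ### Auxiliary infrastructure for the proof -/

/-- The set of vertices outside the closed neighbourhood of `X`. -/
def Out (G : SimpleGraph V) (X : Set V) : Set V :=
  {v | v ∉ X ∧ ∀ x ∈ X, ¬ G.Adj x v}

lemma out_mono {G : SimpleGraph V} {X Y : Set V} (h : X ⊆ Y) : Out G Y ⊆ Out G X :=
  fun _ hv => ⟨fun hx => hv.1 (h hx), fun x hx => hv.2 x (h hx)⟩

/-- A walk of length `n` (as a function `ℕ → V`) inside the set `S`. -/
def IsWalkIn (G : SimpleGraph V) (S : Set V) (f : ℕ → V) (n : ℕ) : Prop :=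
  (∀ i < n, G.Adj (f i) (f (i + 1))) ∧ ∀ i ≤ n, f i ∈ S

/-- `S` is nonempty and any two of its vertices are joined by a walk inside `S`. -/
def ConnIn (G : SimpleGraph V) (S : Set V) : Prop :=
  S.Nonempty ∧ ∀ a ∈ S, ∀ b ∈ S, ∃ n f, f 0 = a ∧ f n = b ∧ IsWalkIn G S f n

lemma IsWalkIn.mono {G : SimpleGraph V} {S T : Set V} {f : ℕ → V} {n : ℕ}
    (h : IsWalkIn G S f n) (hST : S ⊆ T) : IsWalkIn G T f n :=
  ⟨h.1, fun i hi => hST (h.2 i hi)⟩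

lemma walk_append {G : SimpleGraph V} {S : Set V} {a b c : V} {f g : ℕ → V} {n₁ n₂ : ℕ}
    (hf0 : f 0 = a) (hf1 : f n₁ = b) (hf : IsWalkIn G S f n₁)
    (hg0 : g 0 = b) (hg1 : g n₂ = c) (hg : IsWalkIn G S g n₂) :
    ∃ h : ℕ → V, h 0 = a ∧ h (n₁ + n₂) = c ∧ IsWalkIn G S h (n₁ + n₂) := by
  have key : ∀ t, n₁ ≤ t → (if t ≤ n₁ then f t else g (t - n₁)) = g (t - n₁) := by
    intro t ht
    by_cases h2 : t ≤ n₁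
    · have h3 : t = n₁ := by omega
      simp [h3, hf1, hg0.symm]
    · simp [h2]
  refine ⟨fun t => if t ≤ n₁ then f t else g (t - n₁), ?_, ?_, ?_, ?_⟩
  · show (if 0 ≤ n₁ then f 0 else g (0 - n₁)) = a
    simp [hf0]
  · show (if n₁ + n₂ ≤ n₁ then f (n₁ + n₂) else g (n₁ + n₂ - n₁)) = c
    rw [key (n₁ + n₂) (by omega), show n₁ + n₂ - n₁ = n₂ from by omega, hg1]
  · intro i hi
    show G.Adj (if i ≤ n₁ then f i else g (i - n₁))
      (if i + 1 ≤ n₁ then f (i + 1) else g (i + 1 - n₁))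
    by_cases h1 : i + 1 ≤ n₁
    · rw [if_pos h1, if_pos (show i ≤ n₁ from by omega)]
      exact hf.1 i (by omega)
    · rw [key i (by omega), key (i + 1) (by omega),
        show i + 1 - n₁ = (i - n₁) + 1 from by omega]
      exact hg.1 (i - n₁) (by omega)
  · intro i hi
    show (if i ≤ n₁ then f i else g (i - n₁)) ∈ S
    by_cases h1 : i ≤ n₁
    · rw [if_pos h1]; exact hf.2 i h1
    · rw [if_neg h1]; exact hg.2 (i - n₁) (by omega)

lemma walk_single {G : SimpleGraph V} {S : Set V} {a b : V}
    (hadj : G.Adj a b) (ha : a ∈ S) (hb : b ∈ S) :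
    ∃ f : ℕ → V, f 0 = a ∧ f 1 = b ∧ IsWalkIn G S f 1 := by
  refine ⟨fun t => if t = 0 then a else b, by simp, by simp, ?_, ?_⟩
  · intro i hi
    have h0 : i = 0 := by omega
    subst h0
    simpa using hadj
  · intro i _
    by_cases h : i = 0 <;> simp [h, ha, hb]

lemma walk_reverse {G : SimpleGraph V} {S : Set V} {a b : V} {f : ℕ → V} {n : ℕ}
    (hf0 : f 0 = a) (hf1 : f n = b) (hf : IsWalkIn G S f n) :
    ∃ g : ℕ → V, g 0 = b ∧ g n = a ∧ IsWalkIn G S g n := by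
  refine ⟨fun t => f (n - t), by simp [hf1], by simp [hf0], ?_, ?_⟩
  · intro i hi
    show G.Adj (f (n - i)) (f (n - (i + 1)))
    rw [show n - i = (n - (i + 1)) + 1 from by omega]
    exact (hf.1 (n - (i + 1)) (by omega)).symm
  · intro i _
    exact hf.2 (n - i) (by omega)

lemma conn_insert {G : SimpleGraph V} {X : Set V} {x₀ u : V}
    (hX : ConnIn G X) (hx₀ : x₀ ∈ X) (hadj : G.Adj x₀ u) :
    ConnIn G (X ∪ {u}) := by
  have hXS : X ⊆ X ∪ {u} := Set.subset_union_left
  have huS : u ∈ X ∪ {u} := Or.inr rfl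
  have hu_to : ∀ b ∈ X, ∃ n f, f 0 = u ∧ f n = b ∧ IsWalkIn G (X ∪ {u}) f n := by
    intro b hb
    obtain ⟨f₁, h10, h11, h1w⟩ := walk_single hadj.symm huS (hXS hx₀)
    obtain ⟨n₂, f₂, h20, h21, h2w⟩ := hX.2 x₀ hx₀ b hb
    obtain ⟨h, hh⟩ := walk_append h10 h11 h1w h20 h21 (h2w.mono hXS)
    exact ⟨1 + n₂, h, hh⟩
  refine ⟨⟨u, huS⟩, ?_⟩
  rintro a (ha | ha) b (hb | hb)
  · obtain ⟨n, f, h0, h1, hw⟩ := hX.2 a ha b hb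
    exact ⟨n, f, h0, h1, hw.mono hXS⟩
  · rcases hb with rfl
    obtain ⟨n, f, h0, h1, hw⟩ := hu_to a ha
    obtain ⟨g, g0, g1, gw⟩ := walk_reverse h0 h1 hw
    exact ⟨n, g, g0, g1, gw⟩
  · rcases ha with rfl
    exact hu_to b hb
  · obtain rfl : a = u := ha
    obtain rfl : b = a := hb
    exact ⟨0, fun _ => b, rfl, rfl, ⟨fun i hi => absurd hi (by omega), fun i _ => huS⟩⟩

lemma conn_singleton {G : SimpleGraph V} (v : V) : ConnIn G ({v} : Set V) := by
  refine ⟨⟨v, rfl⟩, ?_⟩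
  intro a ha b hb
  obtain rfl : a = v := ha
  obtain rfl : b = a := hb
  exact ⟨0, fun _ => b, rfl, rfl, ⟨fun i hi => absurd hi (by omega), fun i _ => rfl⟩⟩

lemma connected_connIn {G : SimpleGraph V} {X : Set V} (hX : (G.induce X).Connected) :
    ConnIn G X := by
  have aux : ∀ {va vb : ↥X} (_ : (G.induce X).Walk va vb),
      ∃ n f, f 0 = (va : V) ∧ f n = (vb : V) ∧ IsWalkIn G X f n := by
    intro va vb w
    induction w with
    | nil =>
      exact ⟨0, fun _ => _, rfl, rfl,
        ⟨fun i hi => absurd hi (by omega), fun i _ => Subtype.coe_prop _⟩⟩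
    | @cons u' v' w' h p ih =>
      obtain ⟨n, f, h0, h1, hw⟩ := ih
      have hadj : G.Adj (u' : V) (v' : V) := by simpa using h
      obtain ⟨f₁, h10, h11, h1w⟩ := walk_single hadj u'.2 v'.2
      obtain ⟨g, g0, g1, gw⟩ := walk_append h10 h11 h1w h0 h1 hw
      exact ⟨1 + n, g, g0, g1, gw⟩
  constructor
  · obtain ⟨⟨v, hv⟩⟩ := hX.nonempty
    exact ⟨v, hv⟩
  · intro a ha b hb
    obtain ⟨w⟩ := hX.preconnected ⟨a, ha⟩ ⟨b, hb⟩
    exact aux w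

/-- A minimal-length walk yields an induced path (with exact adjacency description). -/
lemma exists_induced_path_in {G : SimpleGraph V} {S : Set V} {x y : V} (hxy : x ≠ y)
    (h : ∃ n f, f 0 = x ∧ f n = y ∧ IsWalkIn G S f n) :
    ∃ (m : ℕ) (f : ℕ → V), 1 ≤ m ∧ f 0 = x ∧ f m = y ∧ (∀ i ≤ m, f i ∈ S) ∧
      (∀ i j, i ≤ m → j ≤ m → (G.Adj (f i) (f j) ↔ (i + 1 = j ∨ j + 1 = i))) ∧
      (∀ i j, i ≤ m → j ≤ m → f i = f j → i = j) := by
  classical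
  obtain ⟨f, hf0, hfm, hw⟩ := Nat.find_spec h
  set m := Nat.find h with hm
  have hmin : ∀ l, l < m → ¬ ∃ f, f 0 = x ∧ f l = y ∧ IsWalkIn G S f l :=
    fun l hl => Nat.find_min h hl
  have hadj := hw.1
  have hmem := hw.2
  -- splicing: no repeats, no chords
  have splice : ∀ i j : ℕ, i < j → j ≤ m →
      (f i = f j ∨ (G.Adj (f i) (f j) ∧ i + 2 ≤ j)) → False := by
    intro i j hij hjm hcase
    rcases hcase with heq | ⟨hA, hij2⟩
    · -- remove the cycle between i and j
      apply hmin (m - (j - i)) (by omega)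
      refine ⟨fun t => if t ≤ i then f t else f (t + (j - i)), by simp [hf0], ?_, ?_, ?_⟩
      · show (if m - (j - i) ≤ i then f (m - (j - i)) else f (m - (j - i) + (j - i))) = y
        by_cases hc : m - (j - i) ≤ i
        · have h1 : j = m := by omega
          have h2 : m - (j - i) = i := by omega
          rw [if_pos hc, h2, heq, h1, hfm]
        · rw [if_neg hc, show m - (j - i) + (j - i) = m from by omega, hfm]
      · intro t ht
        show G.Adj (if t ≤ i then f t else f (t + (j - i)))
          (if t + 1 ≤ i then f (t + 1) else f (t + 1 + (j - i)))
        by_cases hc : t + 1 ≤ i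
        · rw [if_pos hc, if_pos (show t ≤ i from by omega)]
          exact hadj t (by omega)
        · by_cases hc2 : t ≤ i
          · have h1 : t = i := by omega
            rw [if_pos hc2, if_neg hc, h1, heq, show i + 1 + (j - i) = j + 1 from by omega]
            exact hadj j (by omega)
          · rw [if_neg hc2, if_neg hc, show t + 1 + (j - i) = (t + (j - i)) + 1 from by omega]
            exact hadj (t + (j - i)) (by omega)
      · intro t ht
        show (if t ≤ i then f t else f (t + (j - i))) ∈ S
        by_cases hc : t ≤ i
        · rw [if_pos hc]; exact hmem t (by omega)
        · rw [if_neg hc]; exact hmem (t + (j - i)) (by omega)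
    · -- shortcut the chord
      apply hmin (m - (j - i - 1)) (by omega)
      refine ⟨fun t => if t ≤ i then f t else f (t + (j - i - 1)), by simp [hf0], ?_, ?_, ?_⟩
      · show (if m - (j - i - 1) ≤ i then f (m - (j - i - 1))
            else f (m - (j - i - 1) + (j - i - 1))) = y
        rw [if_neg (by omega), show m - (j - i - 1) + (j - i - 1) = m from by omega, hfm]
      · intro t ht
        show G.Adj (if t ≤ i then f t else f (t + (j - i - 1)))
          (if t + 1 ≤ i then f (t + 1) else f (t + 1 + (j - i - 1)))
        by_cases hc : t + 1 ≤ i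
        · rw [if_pos hc, if_pos (show t ≤ i from by omega)]
          exact hadj t (by omega)
        · by_cases hc2 : t ≤ i
          · have h1 : t = i := by omega
            rw [if_pos hc2, if_neg hc, h1, show i + 1 + (j - i - 1) = j from by omega]
            exact hA
          · rw [if_neg hc2, if_neg hc,
              show t + 1 + (j - i - 1) = (t + (j - i - 1)) + 1 from by omega]
            exact hadj (t + (j - i - 1)) (by omega)
      · intro t ht
        show (if t ≤ i then f t else f (t + (j - i - 1))) ∈ S
        by_cases hc : t ≤ i
        · rw [if_pos hc]; exact hmem t (by omega)
        · rw [if_neg hc]; exact hmem (t + (j - i - 1)) (by omega)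
  have hinj : ∀ i j, i ≤ m → j ≤ m → f i = f j → i = j := by
    intro i j hi hj heq
    by_contra hne
    rcases Nat.lt_or_ge i j with hlt | hge
    · exact splice i j hlt hj (Or.inl heq)
    · exact splice j i (by omega) hi (Or.inl heq.symm)
  have hm1 : 1 ≤ m := by
    rcases Nat.eq_zero_or_pos m with h0 | h1
    · exact absurd (hf0.symm.trans (h0 ▸ hfm)) hxy
    · exact h1
  refine ⟨m, f, hm1, hf0, hfm, fun i hi => hmem i hi, ?_, hinj⟩
  intro i j hi hj
  constructor
  · intro hA
    have hne : i ≠ j := fun h0 => G.loopless.irrefl _ (h0 ▸ hA)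
    by_contra hcon
    push_neg at hcon
    obtain ⟨h1, h2⟩ := hcon
    rcases Nat.lt_or_ge i j with hlt | hge
    · exact splice i j hlt hj (Or.inr ⟨hA, by omega⟩)
    · exact splice j i (by omega) hi (Or.inr ⟨hA.symm, by omega⟩)
  · rintro (h1 | h1)
    · subst h1; exact hadj i (by omega)
    · subst h1; exact (hadj j (by omega)).symm

/-- Glue an induced path `q` on `k+2` vertices to an induced path `f` joining its
endpoints (disjoint from and non-adjacent to the interior of `q`), obtaining an
induced cycle containing `q`. -/
lemma glue_cycle {G : SimpleGraph V} {k m : ℕ} (hk : 1 ≤ k) (hm : 2 ≤ m)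
    {q : Fin (k + 2) → V} {f : ℕ → V}
    (hq : IsInducedPathOn G (k + 2) q)
    (hf0 : f 0 = q ⟨0, by omega⟩) (hfm : f m = q ⟨k + 1, by omega⟩)
    (hfadj : ∀ i j, i ≤ m → j ≤ m → (G.Adj (f i) (f j) ↔ (i + 1 = j ∨ j + 1 = i)))
    (hfinj : ∀ i j, i ≤ m → j ≤ m → f i = f j → i = j)
    (hcross : ∀ (s : ℕ) (i : Fin (k + 2)), 1 ≤ s → s + 1 ≤ m → 1 ≤ i.val → i.val ≤ k →
        ¬ G.Adj (f s) (q i) ∧ f s ≠ q i) :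
    InInducedCycle G q := by
  have hqA : ∀ (a b : ℕ) (ha : a < k + 2) (hb : b < k + 2),
      (G.Adj (q ⟨a, ha⟩) (q ⟨b, hb⟩) ↔ (a + 1 = b ∨ b + 1 = a)) :=
    fun a b ha hb => hq.2 ⟨a, ha⟩ ⟨b, hb⟩
  set C : ℕ → V := fun t => if h : t ≤ k + 1 then q ⟨t, by omega⟩ else f ((k + m + 1) - t) with hC
  have hCq : ∀ (t : ℕ) (h : t ≤ k + 1), C t = q ⟨t, by omega⟩ := fun t h => dif_pos h
  have hCf : ∀ (t : ℕ), ¬ t ≤ k + 1 → C t = f ((k + m + 1) - t) := fun t h => dif_neg h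
  have hmod : ∀ t, t < (k + m + 1) → (t + 1) % (k + m + 1) = if t + 1 = (k + m + 1) then 0 else t + 1 := by
    intro t ht
    by_cases hc : t + 1 = (k + m + 1)
    · rw [if_pos hc, hc, Nat.mod_self]
    · rw [if_neg hc, Nat.mod_eq_of_lt (by omega)]
  have main : ∀ a b : ℕ, a < (k + m + 1) → b < (k + m + 1) → a ≤ k + 1 →
      (G.Adj (C a) (C b) ↔ ((a + 1) % (k + m + 1) = b ∨ (b + 1) % (k + m + 1) = a)) := by
    intro a b ha hb hak
    by_cases hbk : b ≤ k + 1
    · rw [hCq a hak, hCq b hbk, hqA a b (by omega) (by omega), hmod a ha, hmod b hb]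
      split_ifs <;> constructor <;> rintro (h | h) <;> first | omega | (exfalso; exact h)
    · have hs1 : 1 ≤ (k + m + 1) - b := by omega
      have hs2 : (k + m + 1) - b + 1 ≤ m := by omega
      rw [hCf b hbk]
      rcases Nat.eq_zero_or_pos a with rfl | hapos
      · rw [hCq 0 (by omega), ← hf0, hfadj 0 ((k + m + 1) - b) (by omega) (by omega),
          hmod 0 (by omega), hmod b hb]
        split_ifs <;> constructor <;> rintro (h | h) <;> first | omega | (exfalso; exact h)
      · by_cases hak1 : a = k + 1
        · subst hak1
          rw [hCq (k + 1) (by omega), ← hfm, hfadj m ((k + m + 1) - b) (by omega) (by omega),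
            hmod (k + 1) (by omega), hmod b hb]
          split_ifs <;> constructor <;> rintro (h | h) <;> first | omega | (exfalso; exact h)
        · have hmid := hcross ((k + m + 1) - b) ⟨a, by omega⟩ hs1 hs2
            (by show 1 ≤ a; omega) (by show a ≤ k; omega)
          rw [hCq a hak]
          refine iff_of_false (fun hA => hmid.1 hA.symm) ?_
          rw [hmod a ha, hmod b hb]
          split_ifs <;> intro h <;> rcases h with h | h <;> first | omega | (exfalso; exact h)
  have mainD : ∀ a b : ℕ, a < (k + m + 1) → b < (k + m + 1) → ¬ a ≤ k + 1 → ¬ b ≤ k + 1 →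
      (G.Adj (C a) (C b) ↔ ((a + 1) % (k + m + 1) = b ∨ (b + 1) % (k + m + 1) = a)) := by
    intro a b ha hb hak hbk
    rw [hCf a hak, hCf b hbk, hfadj ((k + m + 1) - a) ((k + m + 1) - b) (by omega) (by omega),
      hmod a ha, hmod b hb]
    split_ifs <;> constructor <;> rintro (h | h) <;> first | omega | (exfalso; exact h)
  refine ⟨(k + m + 1), fun i => C i.val, ⟨by omega, ?_, ?_⟩, ?_⟩
  · -- injectivity
    intro i j h
    have h' : C i.val = C j.val := h
    obtain ⟨a, ha⟩ : ∃ a, i.val = a := ⟨_, rfl⟩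
    obtain ⟨b, hb⟩ : ∃ b, j.val = b := ⟨_, rfl⟩
    have hlt_i : a < k + m + 1 := ha ▸ i.isLt
    have hlt_j : b < k + m + 1 := hb ▸ j.isLt
    rw [ha, hb] at h'
    suffices hab : a = b by exact Fin.ext (by rw [ha, hb, hab])
    by_cases hik : a ≤ k + 1 <;> by_cases hjk : b ≤ k + 1
    · rw [hCq a hik, hCq b hjk] at h'
      have h2 : (⟨a, by omega⟩ : Fin (k + 2)) = ⟨b, by omega⟩ := hq.1 h'
      have h3 := congrArg Fin.val h2
      exact h3
    · exfalso
      rw [hCq a hik, hCf b hjk] at h'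
      have hs1 : 1 ≤ (k + m + 1) - b := by omega
      have hs2 : (k + m + 1) - b + 1 ≤ m := by omega
      rcases Nat.eq_zero_or_pos a with h0 | hpos
      · have hq0 : q (⟨a, by omega⟩ : Fin (k + 2)) = f 0 := by
          rw [hf0]; exact congrArg q (Fin.ext (by show a = 0; omega))
        have := hfinj 0 ((k + m + 1) - b) (by omega) (by omega) (hq0.symm.trans h')
        omega
      · by_cases hik1 : a = k + 1
        · have hq0 : q (⟨a, by omega⟩ : Fin (k + 2)) = f m := by
            rw [hfm]; exact congrArg q (Fin.ext (by show a = k + 1; omega))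
          have := hfinj m ((k + m + 1) - b) (by omega) (by omega) (hq0.symm.trans h')
          omega
        · exact (hcross ((k + m + 1) - b) ⟨a, by omega⟩ hs1 hs2
            (by show 1 ≤ a; omega) (by show a ≤ k; omega)).2 h'.symm
    · exfalso
      rw [hCf a hik, hCq b hjk] at h'
      have hs1 : 1 ≤ (k + m + 1) - a := by omega
      have hs2 : (k + m + 1) - a + 1 ≤ m := by omega
      rcases Nat.eq_zero_or_pos b with h0 | hpos
      · have hq0 : q (⟨b, by omega⟩ : Fin (k + 2)) = f 0 := by
          rw [hf0]; exact congrArg q (Fin.ext (by show b = 0; omega))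
        have := hfinj ((k + m + 1) - a) 0 (by omega) (by omega) (h'.trans hq0)
        omega
      · by_cases hjk1 : b = k + 1
        · have hq0 : q (⟨b, by omega⟩ : Fin (k + 2)) = f m := by
            rw [hfm]; exact congrArg q (Fin.ext (by show b = k + 1; omega))
          have := hfinj ((k + m + 1) - a) m (by omega) (by omega) (h'.trans hq0)
          omega
        · exact (hcross ((k + m + 1) - a) ⟨b, by omega⟩ hs1 hs2
            (by show 1 ≤ b; omega) (by show b ≤ k; omega)).2 h'
    · rw [hCf a hik, hCf b hjk] at h'
      have := hfinj ((k + m + 1) - a) ((k + m + 1) - b) (by omega) (by omega) h'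
      omega
  · -- adjacency
    intro i j
    by_cases hik : i.val ≤ k + 1
    · exact main i.val j.val i.isLt j.isLt hik
    · by_cases hjk : j.val ≤ k + 1
      · rw [G.adj_comm, main j.val i.val j.isLt i.isLt hjk, or_comm]
      · exact mainD i.val j.val i.isLt j.isLt hik hjk
  · -- range
    rintro v ⟨i, rfl⟩
    refine ⟨⟨i.val, by omega⟩, ?_⟩
    exact (hCq i.val (by omega)).trans (congrArg q (Fin.ext rfl))

/-! ### Transfer lemmas between `G` and induced subgraphs -/

lemma induce_path_up {G : SimpleGraph V} {O : Set V} {k : ℕ} {p : Fin k → ↥O}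
    (hp : IsInducedPathOn (G.induce O) k p) :
    IsInducedPathOn G k (fun i => (p i : V)) := by
  constructor
  · intro i j h
    exact hp.1 (Subtype.ext h)
  · intro i j
    have := hp.2 i j
    simpa using this

lemma induce_cycle_up {G : SimpleGraph V} {O : Set V} {n : ℕ} {c : Fin n → ↥O}
    (hc : IsInducedCycleOn (G.induce O) n c) :
    IsInducedCycleOn G n (fun i => (c i : V)) := by
  refine ⟨hc.1, fun i j h => hc.2.1 (Subtype.ext h), fun i j => ?_⟩
  have := hc.2.2 i j
  simpa using this

lemma induce_path_down {G : SimpleGraph V} {O : Set V} {k : ℕ} {p : Fin k → V}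
    (hp : IsInducedPathOn G k p) (hO : ∀ i, p i ∈ O) :
    IsInducedPathOn (G.induce O) k (fun i => ⟨p i, hO i⟩) := by
  constructor
  · intro i j h
    exact hp.1 (congrArg Subtype.val h)
  · intro i j
    have := hp.2 i j
    simpa using this

/-- A length-`k` window of an induced path on `k+2` vertices. -/
lemma window_path {G : SimpleGraph V} {k : ℕ} {q : Fin (k + 2) → V}
    (hq : IsInducedPathOn G (k + 2) q) (a : ℕ) (ha : a ≤ 2) :
    IsInducedPathOn G k (fun i : Fin k => q ⟨i.val + a, by omega⟩) := by
  constructor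
  · intro i j h
    have h2 := hq.1 h
    have h3 : i.val + a = j.val + a := congrArg Fin.val h2
    exact Fin.ext (by omega)
  · intro i j
    refine (hq.2 ⟨i.val + a, by omega⟩ ⟨j.val + a, by omega⟩).trans ?_
    show ((i.val + a) + 1 = (j.val + a) ∨ (j.val + a) + 1 = (i.val + a)) ↔ _
    constructor <;> rintro (h | h) <;> [left; right; left; right] <;> omega

/-- The middle values of an extension. -/
lemma ext_middle {k : ℕ} {p : Fin k → V} {q : Fin (k + 2) → V}
    (hmid : ∀ i : Fin k, q i.succ.castSucc = p i) (j : ℕ) (h1 : 1 ≤ j) (h2 : j ≤ k) :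
    q ⟨j, by omega⟩ = p ⟨j - 1, by omega⟩ := by
  have h3 := hmid ⟨j - 1, by omega⟩
  rw [← h3]
  exact congrArg q (Fin.ext (by show j = (j - 1) + 1; omega))

lemma q_at_middle {k : ℕ} {p : Fin k → V} {q : Fin (k + 2) → V}
    (hmid : ∀ i : Fin k, q i.succ.castSucc = p i) (i : Fin (k + 2))
    (h1 : 1 ≤ i.val) (h2 : i.val ≤ k) :
    q i = p ⟨i.val - 1, by omega⟩ := by
  have h3 : i = (⟨i.val, i.isLt⟩ : Fin (k + 2)) := Fin.ext rfl
  exact (congrArg q h3).trans (ext_middle hmid i.val h1 h2)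

/-- Avoidability of a path in the maximal situation. -/
lemma maximal_avoidable {G : SimpleGraph V} {k : ℕ} (hk : 1 ≤ k) {X : Set V}
    (hX : ConnIn G X)
    (hstar : ∀ u, u ∉ X → (∃ x ∈ X, G.Adj x u) →
      ∀ p' : Fin k → V, IsInducedPathOn G k p' → (∀ i, p' i ∈ Out G X) → ∃ i, G.Adj u (p' i))
    {p : Fin k → V} (hp : IsInducedPathOn G k p) (hpO : ∀ i, p i ∈ Out G X)
    (hHav : ∀ q : Fin (k + 2) → V, IsExtension G p q → (∀ i, q i ∈ Out G X) →
      InInducedCycle G q) :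
    IsAvoidable G p := by
  refine ⟨hp, ?_⟩
  rintro q ⟨hq, hmid⟩
  have hq1 : q ⟨1, by omega⟩ = p ⟨0, by omega⟩ :=
    (ext_middle hmid 1 (by omega) (by omega)).trans (congrArg p (Fin.ext rfl))
  have hqk : q ⟨k, by omega⟩ = p ⟨k - 1, by omega⟩ := ext_middle hmid k (by omega) (by omega)
  have hadj_x : G.Adj (q ⟨0, by omega⟩) (p ⟨0, by omega⟩) := by
    have h := (hq.2 ⟨0, by omega⟩ ⟨1, by omega⟩).2 (Or.inl rfl)
    rwa [hq1] at h
  have hadj_y : G.Adj (p ⟨k - 1, by omega⟩) (q ⟨k + 1, by omega⟩) := by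
    have h := (hq.2 ⟨k, by omega⟩ ⟨k + 1, by omega⟩).2 (Or.inl rfl)
    rwa [hqk] at h
  have hxX : q ⟨0, by omega⟩ ∉ X := fun hx => (hpO ⟨0, by omega⟩).2 _ hx hadj_x
  have hyX : q ⟨k + 1, by omega⟩ ∉ X := fun hy => (hpO ⟨k - 1, by omega⟩).2 _ hy hadj_y.symm
  have hnxy : ¬ G.Adj (q ⟨0, by omega⟩) (q ⟨k + 1, by omega⟩) := by
    intro hA
    have h2 : (0 : ℕ) + 1 = k + 1 ∨ (k + 1) + 1 = 0 := (hq.2 ⟨0, by omega⟩ ⟨k + 1, by omega⟩).1 hA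
    omega
  have hxyne : q ⟨0, by omega⟩ ≠ q ⟨k + 1, by omega⟩ := by
    intro hA
    have h2 : (0 : ℕ) = k + 1 := congrArg Fin.val (hq.1 hA)
    omega
  by_cases hxO : q ⟨0, by omega⟩ ∈ Out G X <;> by_cases hyO : q ⟨k + 1, by omega⟩ ∈ Out G X
  · -- both endpoints outside N[X] : use avoidability inside the induced subgraph
    apply hHav q ⟨hq, hmid⟩
    intro i
    by_cases hi0 : i.val = 0
    · exact Set.mem_of_eq_of_mem
        (congrArg q (Fin.ext (by show i.val = 0; omega) : i = (⟨0, by omega⟩ : Fin (k + 2)))) hxO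
    · by_cases hik : i.val = k + 1
      · exact Set.mem_of_eq_of_mem
          (congrArg q (Fin.ext (by show i.val = k + 1; omega) :
            i = (⟨k + 1, by omega⟩ : Fin (k + 2)))) hyO
      · have hlt := i.isLt
        exact Set.mem_of_eq_of_mem (q_at_middle hmid i (by omega) (by omega)) (hpO _)
  · -- x outside, y in the boundary : impossible by maximality
    exfalso
    have hyB : ∃ z ∈ X, G.Adj z (q ⟨k + 1, by omega⟩) := by
      by_contra hcon
      push_neg at hcon
      exact hyO ⟨hyX, hcon⟩
    have hW := window_path hq 0 (by omega)
    have hWO : ∀ i : Fin k, q ⟨i.val + 0, by omega⟩ ∈ Out G X := by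
      intro i
      by_cases hi0 : i.val = 0
      · exact Set.mem_of_eq_of_mem
          (congrArg q (Fin.ext (by show i.val + 0 = 0; omega) :
            (⟨i.val + 0, by omega⟩ : Fin (k + 2)) = ⟨0, by omega⟩)) hxO
      · have hlt := i.isLt
        exact Set.mem_of_eq_of_mem
          (q_at_middle hmid ⟨i.val + 0, by omega⟩ (by show 1 ≤ i.val + 0; omega)
            (by show i.val + 0 ≤ k; omega)) (hpO _)
    obtain ⟨i, hi⟩ := hstar (q ⟨k + 1, by omega⟩) hyX hyB _ hW hWO
    have h4 : (k + 1) + 1 = i.val + 0 ∨ (i.val + 0) + 1 = k + 1 :=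
      (hq.2 ⟨k + 1, by omega⟩ ⟨i.val + 0, by omega⟩).1 hi
    have hlt := i.isLt
    omega
  · -- y outside, x in the boundary : impossible by maximality
    exfalso
    have hxB : ∃ z ∈ X, G.Adj z (q ⟨0, by omega⟩) := by
      by_contra hcon
      push_neg at hcon
      exact hxO ⟨hxX, hcon⟩
    have hW := window_path hq 2 (by omega)
    have hWO : ∀ i : Fin k, q ⟨i.val + 2, by omega⟩ ∈ Out G X := by
      intro i
      have hlt := i.isLt
      by_cases hik : i.val + 2 = k + 1
      · exact Set.mem_of_eq_of_mem
          (congrArg q (Fin.ext (by show i.val + 2 = k + 1; omega) :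
            (⟨i.val + 2, by omega⟩ : Fin (k + 2)) = ⟨k + 1, by omega⟩)) hyO
      · exact Set.mem_of_eq_of_mem
          (q_at_middle hmid ⟨i.val + 2, by omega⟩ (by show 1 ≤ i.val + 2; omega)
            (by show i.val + 2 ≤ k; omega)) (hpO _)
    obtain ⟨i, hi⟩ := hstar (q ⟨0, by omega⟩) hxX hxB _ hW hWO
    have h4 : (0 : ℕ) + 1 = i.val + 2 ∨ (i.val + 2) + 1 = 0 :=
      (hq.2 ⟨0, by omega⟩ ⟨i.val + 2, by omega⟩).1 hi
    omega
  · -- both endpoints in the boundary : route the cycle through X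
    have hxB : ∃ z ∈ X, G.Adj z (q ⟨0, by omega⟩) := by
      by_contra hcon
      push_neg at hcon
      exact hxO ⟨hxX, hcon⟩
    have hyB : ∃ z ∈ X, G.Adj z (q ⟨k + 1, by omega⟩) := by
      by_contra hcon
      push_neg at hcon
      exact hyO ⟨hyX, hcon⟩
    obtain ⟨x₁, hx₁X, hx₁⟩ := hxB
    obtain ⟨y₁, hy₁X, hy₁⟩ := hyB
    -- build a walk from x to y inside X ∪ {x, y}
    have hxS : q ⟨0, by omega⟩ ∈ X ∪ {q ⟨0, by omega⟩, q ⟨k + 1, by omega⟩} :=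
      Or.inr (Or.inl rfl)
    have hyS : q ⟨k + 1, by omega⟩ ∈ X ∪ {q ⟨0, by omega⟩, q ⟨k + 1, by omega⟩} :=
      Or.inr (Or.inr rfl)
    have hXS : X ⊆ X ∪ {q ⟨0, by omega⟩, q ⟨k + 1, by omega⟩} := Set.subset_union_left
    obtain ⟨f₁, h10, h11, h1w⟩ := walk_single hx₁.symm hxS (hXS hx₁X)
    obtain ⟨n₂, f₂, h20, h21, h2w⟩ := hX.2 x₁ hx₁X y₁ hy₁X
    obtain ⟨f₃, h30, h31, h3w⟩ := walk_single hy₁ (hXS hy₁X) hyS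
    obtain ⟨g, hg0, hg1, hgw⟩ := walk_append h10 h11 h1w h20 h21 (h2w.mono hXS)
    obtain ⟨g', hg'0, hg'1, hg'w⟩ := walk_append hg0 hg1 hgw h30 h31 h3w
    obtain ⟨m, f, hm1, hf0, hfm, hfS, hfadj, hfinj⟩ :=
      exists_induced_path_in hxyne ⟨1 + n₂ + 1, g', hg'0, hg'1, hg'w⟩
    have hm2 : 2 ≤ m := by
      rcases Nat.lt_or_ge m 2 with hlt | hge
      · exfalso
        have hmeq : m = 1 := by omega
        subst hmeq
        have hA : G.Adj (f 0) (f 1) := (hfadj 0 1 (by omega) (by omega)).2 (Or.inl rfl)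
        rw [hf0, hfm] at hA
        exact hnxy hA
      · exact hge
    have hint : ∀ s, 1 ≤ s → s + 1 ≤ m → f s ∈ X := by
      intro s hs1 hs2
      rcases hfS s (by omega) with hs | hs
      · exact hs
      · exfalso
        rcases hs with hs | hs
        · rw [← hf0] at hs
          have := hfinj s 0 (by omega) (by omega) hs
          omega
        · rw [← hfm] at hs
          have := hfinj s m (by omega) (by omega) hs
          omega
    have hcross : ∀ (s : ℕ) (i : Fin (k + 2)), 1 ≤ s → s + 1 ≤ m → 1 ≤ i.val → i.val ≤ k →
        ¬ G.Adj (f s) (q i) ∧ f s ≠ q i := by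
      intro s i hs1 hs2 hi1 hi2
      have hfsX := hint s hs1 hs2
      have hqi := q_at_middle hmid i hi1 hi2
      constructor
      · rw [hqi]
        exact (hpO ⟨i.val - 1, by omega⟩).2 (f s) hfsX
      · rw [hqi]
        intro he
        exact (hpO ⟨i.val - 1, by omega⟩).1 (he ▸ hfsX)
    exact glue_cycle hk hm2 hq hf0 hfm hfadj hfinj hcross

lemma subtype_hHav {G : SimpleGraph V} {O : Set V} {k : ℕ} {ph : Fin k → ↥O}
    (hav : IsAvoidable (G.induce O) ph) :
    ∀ q : Fin (k + 2) → V, IsExtension G (fun i => (ph i : V)) q → (∀ i, q i ∈ O) →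
      InInducedCycle G q := by
  rintro q ⟨hq, hmid⟩ hqO
  have hext : IsExtension (G.induce O) ph (fun i => ⟨q i, hqO i⟩) := by
    refine ⟨induce_path_down hq hqO, fun i => Subtype.ext ?_⟩
    exact hmid i
  obtain ⟨n, c, hc, hrange⟩ := hav.2 _ hext
  refine ⟨n, fun i => (c i : V), induce_cycle_up hc, ?_⟩
  rintro v ⟨i, rfl⟩
  obtain ⟨j, hj⟩ := hrange (Set.mem_range_self i)
  exact ⟨j, congrArg Subtype.val hj⟩

universe u

/-- The master induction: the relative statement (for connected `X`) and the absolute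
statement, by strong induction on the number of vertices. -/
theorem master : ∀ (N : ℕ) (W : Type u) [Fintype W] (G : SimpleGraph W) (k : ℕ),
    1 ≤ k → Fintype.card W ≤ N →
    ((∀ X : Set W, ConnIn G X →
      ((¬ ∃ p : Fin k → W, IsInducedPathOn G k p ∧ ∀ i, p i ∈ Out G X) ∨
       (∃ p : Fin k → W, IsInducedPathOn G k p ∧ (∀ i, p i ∈ Out G X) ∧ IsAvoidable G p))) ∧
     ((∃ p : Fin k → W, IsInducedPathOn G k p) →
       ∃ p : Fin k → W, IsInducedPathOn G k p ∧ IsAvoidable G p)) := by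
  intro N
  induction N with
  | zero =>
    intro W _ G k hk hcard
    have hE : IsEmpty W := by
      rw [← Fintype.card_eq_zero_iff]
      omega
    constructor
    · intro X hX
      left
      rintro ⟨p, -, -⟩
      exact hE.false (p ⟨0, by omega⟩)
    · rintro ⟨p, -⟩
      exact (hE.false (p ⟨0, by omega⟩)).elim
  | succ N ih =>
    intro W _W G k hk hcard
    classical
    have hS : ∀ (M : ℕ) (X : Set W), (Xᶜ).ncard ≤ M → ConnIn G X →
        ((¬ ∃ p : Fin k → W, IsInducedPathOn G k p ∧ ∀ i, p i ∈ Out G X) ∨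
         (∃ p : Fin k → W, IsInducedPathOn G k p ∧ (∀ i, p i ∈ Out G X) ∧ IsAvoidable G p)) := by
      intro M
      induction M with
      | zero =>
        intro X hM hX
        left
        rintro ⟨p, hp, hout⟩
        have h1 : p ⟨0, by omega⟩ ∈ (Xᶜ : Set W) := (hout ⟨0, by omega⟩).1
        have h2 : (Xᶜ : Set W) = ∅ := by
          rw [← Set.ncard_eq_zero (Set.toFinite _)]
          omega
        rw [h2] at h1
        exact h1
      | succ M ihM =>
        intro X hM hX
        by_cases hex : ∃ p : Fin k → W, IsInducedPathOn G k p ∧ ∀ i, p i ∈ Out G X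
        · by_cases hgrow : ∃ u, u ∉ X ∧ (∃ x ∈ X, G.Adj x u) ∧
              ∃ p : Fin k → W, IsInducedPathOn G k p ∧ ∀ i, p i ∈ Out G (X ∪ {u})
          · obtain ⟨u, huX, ⟨x₀, hx₀, hadj⟩, hp'⟩ := hgrow
            have hconn' := conn_insert hX hx₀ hadj
            have hcompl : ((X ∪ {u})ᶜ : Set W) = Xᶜ \ {u} := by
              ext v
              simp [not_or, and_comm]
            have hcard' : ((X ∪ {u})ᶜ : Set W).ncard ≤ M := by
              rw [hcompl]
              have := Set.ncard_diff_singleton_lt_of_mem (show u ∈ Xᶜ from huX) (Set.toFinite _)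
              omega
            rcases ihM (X ∪ {u}) hcard' hconn' with hno | ⟨p', h1, h2, h3⟩
            · exact absurd hp' hno
            · exact Or.inr ⟨p', h1, fun i => out_mono Set.subset_union_left (h2 i), h3⟩
          · -- maximal case
            push_neg at hgrow
            right
            obtain ⟨p₀, hp₀, hout₀⟩ := hex
            have hstar : ∀ u, u ∉ X → (∃ x ∈ X, G.Adj x u) →
                ∀ p' : Fin k → W, IsInducedPathOn G k p' → (∀ i, p' i ∈ Out G X) →
                  ∃ i, G.Adj u (p' i) := by
              intro u hu1 hu2 p' hp' hpO'
              by_contra hno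
              push_neg at hno
              obtain ⟨x₀, hx₀, hadjx₀⟩ := hu2
              obtain ⟨i, hi⟩ := hgrow u hu1 ⟨x₀, hx₀, hadjx₀⟩ p' hp'
              apply hi
              constructor
              · rintro (h | h)
                · exact (hpO' i).1 h
                · obtain rfl : p' i = u := h
                  exact (hpO' i).2 x₀ hx₀ hadjx₀
              · rintro z (hz | hz)
                · exact (hpO' i).2 z hz
                · obtain rfl : z = u := hz
                  exact fun hA => hno i hA
            obtain ⟨x₀, hx₀X⟩ := hX.1
            haveI : Fintype ↥(Out G X) := Fintype.ofFinite _
            have hcardO : Fintype.card ↥(Out G X) ≤ N := by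
              have h1 : Fintype.card ↥(Out G X) = (Out G X).ncard := by
                rw [← Nat.card_coe_set_eq, Nat.card_eq_fintype_card]
              have hne : Out G X ≠ Set.univ := by
                intro he
                have hm : x₀ ∈ Out G X := by rw [he]; exact Set.mem_univ x₀
                exact hm.1 hx₀X
              have h3 : Out G X ⊂ Set.univ := Set.ssubset_univ_iff.mpr hne
              have h2 := Set.ncard_lt_ncard h3 Set.finite_univ
              rw [Set.ncard_univ, Nat.card_eq_fintype_card] at h2
              omega
            have hA := (ih ↥(Out G X) (G.induce (Out G X)) k hk hcardO).2
            have hp₀' := induce_path_down hp₀ hout₀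
            obtain ⟨ph, hph, hphav⟩ := hA ⟨_, hp₀'⟩
            refine ⟨fun i => (ph i : W), induce_path_up hph, fun i => (ph i).2, ?_⟩
            exact maximal_avoidable hk hX hstar (induce_path_up hph) (fun i => (ph i).2)
              (subtype_hHav hphav)
        · exact Or.inl hex
    refine ⟨fun X hX => hS _ X le_rfl hX, ?_⟩
    rintro ⟨p, hp⟩
    by_cases hv : ∃ v : W, ∃ p' : Fin k → W, IsInducedPathOn G k p' ∧ ∀ i, p' i ∈ Out G {v}
    · obtain ⟨v, hex⟩ := hv
      rcases hS _ {v} le_rfl (conn_singleton v) with hno | ⟨p', h1, _h2, h3⟩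
      · exact absurd hex hno
      · exact ⟨p', h1, h3⟩
    · push_neg at hv
      refine ⟨p, hp, hp, ?_⟩
      rintro q ⟨hq, hmid⟩
      exfalso
      have hW := window_path hq 0 (by omega)
      obtain ⟨i, hi⟩ := hv (q ⟨k + 1, by omega⟩) _ hW
      by_cases hc : q ⟨i.val + 0, by omega⟩ = q ⟨k + 1, by omega⟩
      · have h3 : i.val + 0 = k + 1 := congrArg Fin.val (hq.1 hc)
        have := i.isLt
        omega
      · have hAdj : G.Adj (q ⟨k + 1, by omega⟩) (q ⟨i.val + 0, by omega⟩) := by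
          by_contra hA
          apply hi
          constructor
          · intro h
            exact hc h
          · intro z hz
            obtain rfl : z = q ⟨k + 1, by omega⟩ := hz
            exact hA
        have h4 : (k + 1) + 1 = i.val + 0 ∨ (i.val + 0) + 1 = k + 1 :=
          (hq.2 ⟨k + 1, by omega⟩ ⟨i.val + 0, by omega⟩).1 hAdj
        have := i.isLt
        omega

/-- If `G[X]` is connected, then either `G − N[X]` has no induced `P_k`, or some induced
`P_k` inside `G − N[X]` is avoidable in `G`. -/
theorem stmt8 [Fintype V] (k : ℕ) (hk : 1 ≤ k) (G : SimpleGraph V) (X : Set V)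
    (hX : (G.induce X).Connected) :
    (¬ ∃ p : Fin k → V, IsInducedPathOn G k p ∧
        ∀ i, p i ∉ X ∧ ∀ x ∈ X, ¬ G.Adj x (p i)) ∨
    (∃ p : Fin k → V, IsInducedPathOn G k p ∧
        (∀ i, p i ∉ X ∧ ∀ x ∈ X, ¬ G.Adj x (p i)) ∧ IsAvoidable G p) := by
  have hc := connected_connIn hX
  rcases (master (Fintype.card V) V G k hk le_rfl).1 X hc with h | ⟨p, h1, h2, h3⟩
  · left
    rintro ⟨p, hp, hout⟩
    exact h ⟨p, hp, fun i => hout i⟩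
  · right
    exact ⟨p, h1, fun i => h2 i, h3⟩
end
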